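/- arXiv:2510.03499 — 4 statements merged into one kernel-verified Lean document; each statement's English description precedes it below -/
import Mathlib

section
/- Let v be a leaf vertex of a banana tree G with unique neighbor w, let a = |E(v,w)| be the number of edges between v and w, and let G' = G − v. Then f(G, v, 0) = min{1 + f(G', w, 0), a + f(G', w, a)}. -/
open Finset

attribute [local instance] Classical.propDecidable

noncomputable section

/-- A finite loopless multigraph on vertex type `V`, given by a symmetric
edge-multiplicity function: `mul u v` is the number of edges joining `u` and `v`. -/
structure Multigraph (V : Type) [Fintype V] where
  mul : V → V → ℕ
  symm : ∀ u v, mul u v = mul v u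
  loopless : ∀ v, mul v v = 0

namespace Multigraph

variable {V : Type} [Fintype V]

/-- The underlying simple graph of a multigraph. -/
def underlying (G : Multigraph V) : SimpleGraph V where
  Adj u v := 0 < G.mul u v
  symm := by
    constructor
    intro u v h
    rwa [G.symm] at h
  loopless := by
    constructor
    intro v h
    simp [G.loopless] at h

/-- A multigraph is connected if its underlying simple graph is. -/
def Connected (G : Multigraph V) : Prop := G.underlying.Connected

/-- A banana tree is a multigraph whose underlying simple graph is a tree. -/
def IsBananaTree (G : Multigraph V) : Prop := G.underlying.IsTree

/-- The valence (degree) of a vertex. -/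
def valence (G : Multigraph V) (v : V) : ℕ := ∑ w, G.mul v w

/-- The number of edges of a multigraph. -/
def edgeCount (G : Multigraph V) : ℕ := (∑ u, ∑ v, G.mul u v) / 2

/-- The genus (first Betti number) `|E| - |V| + 1` of a connected multigraph. -/
def genus (G : Multigraph V) : ℕ := G.edgeCount + 1 - Fintype.card V

/-- The degree of a divisor: the total number of chips. -/
def degree (D : V → ℤ) : ℤ := ∑ v, D v

/-- A divisor is effective if it is nonnegative everywhere. -/
def Effective (D : V → ℤ) : Prop := ∀ v, 0 ≤ D v

/-- Linear equivalence of divisors: `D'` is obtained from `D` by a finite sequence of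
chip-firing moves, equivalently (for connected graphs) via an integral firing script `σ`. -/
def LinEquiv (G : Multigraph V) (D D' : V → ℤ) : Prop :=
  ∃ σ : V → ℤ, ∀ v, D' v = D v + ∑ w, (G.mul v w : ℤ) * (σ w - σ v)

/-- A divisor has positive rank if for every vertex `v` it is linearly equivalent to an
effective divisor placing at least one chip on `v`. -/
def PosRank (G : Multigraph V) (D : V → ℤ) : Prop :=
  ∀ v, ∃ D', G.LinEquiv D D' ∧ Effective D' ∧ 1 ≤ D' v

/-- The (divisorial) gonality: the minimum degree of a positive-rank effective divisor. -/
def gonality (G : Multigraph V) : ℕ :=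
  sInf {d : ℕ | ∃ D : V → ℤ, Effective D ∧ G.PosRank D ∧ degree D = (d : ℤ)}

/-- `f(G, v, k)`: the minimum degree of an effective divisor `D` on `G` such that
`D + k·v` has positive rank. -/
def fmin (G : Multigraph V) (v : V) (k : ℕ) : ℕ :=
  sInf {d : ℕ | ∃ D : V → ℤ, Effective D ∧
    G.PosRank (fun u => D u + if u = v then (k : ℤ) else 0) ∧ degree D = (d : ℤ)}

/-- Delete a vertex from a multigraph. -/
def deleteVertex (G : Multigraph V) (v : V) : Multigraph {u : V // u ≠ v} where
  mul a b := G.mul a.1 b.1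
  symm := fun a b => G.symm a.1 b.1
  loopless := fun a => G.loopless a.1

/-- Delete one single edge between `u` and `w` (if any) from a multigraph. -/
def deleteOneEdge (G : Multigraph V) (u w : V) : Multigraph V where
  mul x y := if (x = u ∧ y = w) ∨ (x = w ∧ y = u) then G.mul x y - 1 else G.mul x y
  symm := by
    intro x y
    by_cases h : (x = u ∧ y = w) ∨ (x = w ∧ y = u)
    · have h' : (y = u ∧ x = w) ∨ (y = w ∧ x = u) := by tauto
      simp [h, h', G.symm x y]
    · have h' : ¬((y = u ∧ x = w) ∨ (y = w ∧ x = u)) := by tauto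
      simp [h, h', G.symm x y]
  loopless := by
    intro v
    by_cases h : (v = u ∧ v = w) ∨ (v = w ∧ v = u)
    · simp [h, G.loopless]
    · simp [h, G.loopless]

/-- The adjacency move from `v` to `w` on a banana tree: the subset-firing move at the
connected component of `v` after removing the `v`-`w` edge bunch.  Its net effect is to
move `|E(v,w)|` chips from `v` to `w`. -/
def adjMove (G : Multigraph V) (v w : V) (D : V → ℤ) : V → ℤ :=
  fun u => if u = v then D u - (G.mul v w : ℤ)
    else if u = w then D u + (G.mul v w : ℤ) else D u

/-- A single legal adjacency move: both divisors are effective and the second is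
obtained from the first by an adjacency move between adjacent vertices. -/
def LegalAdjStep (G : Multigraph V) (D D' : V → ℤ) : Prop :=
  ∃ v w, G.underlying.Adj v w ∧ Effective D ∧ Effective D' ∧ D' = G.adjMove v w D

/-- A scramble: a collection of nonempty vertex sets (eggs), each inducing a connected
subgraph. -/
def IsScramble (G : Multigraph V) (S : Finset (Finset V)) : Prop :=
  ∀ X ∈ S, X.Nonempty ∧ (G.underlying.induce (X : Set V)).Connected

/-- A hitting set of a scramble: a set of vertices meeting every egg. -/
def IsHittingSet (S : Finset (Finset V)) (T : Finset V) : Prop :=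
  ∀ X ∈ S, (X ∩ T).Nonempty

/-- The hitting number of a scramble. -/
def hittingNumber (S : Finset (Finset V)) : ℕ∞ :=
  sInf {t : ℕ∞ | ∃ T : Finset V, IsHittingSet S T ∧ (T.card : ℕ∞) = t}

/-- The simple graph remaining after removing `c u w` of the edges of each bunch. -/
def cutGraph (G : Multigraph V) (c : V → V → ℕ) : SimpleGraph V where
  Adj u w := u ≠ w ∧ c u w < G.mul u w ∧ c w u < G.mul w u
  symm := ⟨fun u w h => ⟨h.1.symm, h.2.2, h.2.1⟩⟩
  loopless := ⟨fun u h => h.1 rfl⟩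

/-- `c` describes an egg-cut of the scramble `S`: a set of edges of `G` (given by the
number `c u w` of edges removed from each bunch) whose removal leaves at least two
connected components each completely containing an egg. -/
def IsEggCut (G : Multigraph V) (S : Finset (Finset V)) (c : V → V → ℕ) : Prop :=
  (∀ u w, c u w = c w u) ∧ (∀ u w, c u w ≤ G.mul u w) ∧
  ∃ X₁ ∈ S, ∃ X₂ ∈ S,
    (∀ x ∈ X₁, ∀ y ∈ X₁, (G.cutGraph c).Reachable x y) ∧
    (∀ x ∈ X₂, ∀ y ∈ X₂, (G.cutGraph c).Reachable x y) ∧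
    (∀ x ∈ X₁, ∀ y ∈ X₂, ¬ (G.cutGraph c).Reachable x y)

/-- The egg-cut number of a scramble (`⊤` if no egg-cut exists). -/
def eggCutNumber (G : Multigraph V) (S : Finset (Finset V)) : ℕ∞ :=
  sInf {t : ℕ∞ | ∃ c : V → V → ℕ, G.IsEggCut S c ∧
    ((∑ u, ∑ w, c u w : ℕ) : ℕ∞) = 2 * t}

/-- The order of a scramble: the minimum of its hitting number and egg-cut number. -/
def scrambleOrder (G : Multigraph V) (S : Finset (Finset V)) : ℕ∞ :=
  min (hittingNumber S) (G.eggCutNumber S)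

/-- The scramble number of a multigraph: the maximum order of a scramble on it. -/
def scrambleNumber (G : Multigraph V) : ℕ∞ :=
  sSup {m : ℕ∞ | ∃ S : Finset (Finset V), G.IsScramble S ∧ G.scrambleOrder S = m}

/-- The weight of a node `t` in a tree-cut decomposition `(T, X)`: the number of vertices
mapped to `t` plus the number of edges routed through `t` with neither endpoint mapped
to `t`. -/
def nodeWeight (G : Multigraph V) {N : Type} [Fintype N] (T : SimpleGraph N)
    (X : V → N) (t : N) : ℕ :=
  (Finset.univ.filter fun v => X v = t).card +
    (∑ u, ∑ w, if X u ≠ t ∧ X w ≠ t ∧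
        ¬ (T.deleteEdges {e | t ∈ e}).Reachable (X u) (X w)
      then G.mul u w else 0) / 2

/-- The weight of a link `pq` in a tree-cut decomposition `(T, X)`: the number of edges
of `G` routed through that link. -/
def linkWeight (G : Multigraph V) {N : Type} (T : SimpleGraph N)
    (X : V → N) (p q : N) : ℕ :=
  (∑ u, ∑ w, if ¬ (T.deleteEdges {s(p, q)}).Reachable (X u) (X w)
    then G.mul u w else 0) / 2

/-- The width of a tree-cut decomposition `(T, X)`: the maximum of all node and link
weights. -/
def tcdWidth (G : Multigraph V) {N : Type} [Fintype N] (T : SimpleGraph N)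
    (X : V → N) : ℕ :=
  max (Finset.univ.sup fun t => G.nodeWeight T X t)
      (Finset.univ.sup fun p : N × N =>
        if T.Adj p.1 p.2 then G.linkWeight T X p.1 p.2 else 0)

/-- The screewidth of a multigraph: the minimum width of a tree-cut decomposition. -/
def screewidth (G : Multigraph V) : ℕ :=
  sInf {w : ℕ | ∃ (m : ℕ) (T : SimpleGraph (Fin m)), T.IsTree ∧
    ∃ X : V → Fin m, G.tcdWidth T X = w}

/-- The banana path on `n+1` vertices `v_0, …, v_n`, with `a i` edges joining
`v_i` and `v_{i+1}` (for `0 ≤ i < n`). -/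
def bananaPath (n : ℕ) (a : ℕ → ℕ) : Multigraph (Fin (n + 1)) where
  mul i j := if i.val + 1 = j.val then a i.val else if j.val + 1 = i.val then a j.val else 0
  symm := by
    intro u v
    try dsimp only
    split_ifs <;> first | rfl | (exfalso; omega)
  loopless := by
    intro v
    have h : ¬ (v.val + 1 = v.val) := by omega
    simp [h]

/-- The banana star with central vertex `Sum.inl ()` and, for each `i : Fin k`,
`r i` leaves joined to the center by `a i` parallel edges. -/
def bananaStar (k : ℕ) (a r : Fin k → ℕ) :
    Multigraph (Unit ⊕ (Σ i : Fin k, Fin (r i))) where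
  mul x y :=
    match x, y with
    | Sum.inl _, Sum.inr ⟨i, _⟩ => a i
    | Sum.inr ⟨i, _⟩, Sum.inl _ => a i
    | _, _ => 0
  symm := by
    intro u v
    rcases u with u | ⟨i, li⟩ <;> rcases v with v | ⟨j, lj⟩ <;> rfl
  loopless := by
    intro v
    rcases v with v | ⟨i, li⟩ <;> rfl

-- ===== auxiliary lemmas =====

lemma linEquiv_refl (G : Multigraph V) (D : V → ℤ) : G.LinEquiv D D :=
  ⟨0, by simp⟩

lemma linEquiv_trans {G : Multigraph V} {D E F : V → ℤ}
    (h1 : G.LinEquiv D E) (h2 : G.LinEquiv E F) : G.LinEquiv D F := by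
  obtain ⟨σ, hσ⟩ := h1; obtain ⟨τ, hτ⟩ := h2
  refine ⟨fun x => σ x + τ x, fun u => ?_⟩
  rw [hτ u, hσ u, add_assoc, ← Finset.sum_add_distrib]
  congr 1; apply Finset.sum_congr rfl; intro x _; ring

lemma linEquiv_symm {G : Multigraph V} {D E : V → ℤ}
    (h : G.LinEquiv D E) : G.LinEquiv E D := by
  obtain ⟨σ, hσ⟩ := h
  refine ⟨fun x => -σ x, fun u => ?_⟩
  rw [hσ u]
  have h2 : ∀ x ∈ Finset.univ, (G.mul u x : ℤ) * (-σ x - -σ u)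
      = -((G.mul u x : ℤ) * (σ x - σ u)) := fun x _ => by ring
  rw [Finset.sum_congr rfl h2, Finset.sum_neg_distrib]
  ring

lemma linEquiv_sub_const {G : Multigraph V} {D E : V → ℤ} (g : V → ℤ)
    (h : G.LinEquiv D E) : G.LinEquiv (fun u => D u - g u) (fun u => E u - g u) := by
  obtain ⟨σ, hσ⟩ := h
  exact ⟨σ, fun u => by simp only []; rw [hσ u]; ring⟩

lemma degree_eq_of_linEquiv {G : Multigraph V} {D E : V → ℤ}
    (h : G.LinEquiv D E) : degree E = degree D := by
  obtain ⟨σ, hσ⟩ := h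
  unfold degree
  simp only [hσ]
  rw [Finset.sum_add_distrib]
  have key : ∑ u, ∑ x, (G.mul u x : ℤ) * (σ x - σ u) = 0 := by
    have h2 : ∀ u ∈ Finset.univ, ∀ x ∈ Finset.univ,
        (G.mul u x : ℤ) * (σ x - σ u)
          = (G.mul u x : ℤ) * σ x - (G.mul u x : ℤ) * σ u :=
      fun u _ x _ => by ring
    calc ∑ u, ∑ x, (G.mul u x : ℤ) * (σ x - σ u)
        = ∑ u, ∑ x, ((G.mul u x : ℤ) * σ x - (G.mul u x : ℤ) * σ u) :=
          Finset.sum_congr rfl fun u hu => Finset.sum_congr rfl (h2 u hu)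
      _ = (∑ u, ∑ x, (G.mul u x : ℤ) * σ x) - ∑ u, ∑ x, (G.mul u x : ℤ) * σ u := by
          rw [← Finset.sum_sub_distrib]
          exact Finset.sum_congr rfl fun u _ => Finset.sum_sub_distrib _ _
      _ = 0 := by
          rw [Finset.sum_comm (f := fun u x => (G.mul u x : ℤ) * σ x), sub_eq_zero]
          apply Finset.sum_congr rfl; intro x _
          apply Finset.sum_congr rfl; intro u _
          rw [G.symm]
  rw [key, add_zero]

lemma shift_zero {W : Type} (x : W) (D : W → ℤ) :
    (fun u => D u + if u = x then ((0 : ℕ) : ℤ) else 0) = D := by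
  funext u; simp

lemma fmin_set_nonempty {W : Type} [Fintype W] (G : Multigraph W) (x : W) (k : ℕ) :
    {d : ℕ | ∃ D : W → ℤ, Effective D ∧
      G.PosRank (fun u => D u + if u = x then (k : ℤ) else 0) ∧
      degree D = (d : ℤ)}.Nonempty := by
  refine ⟨Fintype.card W, fun _ => 1, fun _ => by norm_num, ?_, by simp [degree]⟩
  intro u
  refine ⟨fun t => 1 + if t = x then (k : ℤ) else 0, linEquiv_refl _ _, ?_, ?_⟩
  · intro t; simp only []; split_ifs <;> positivity
  · simp only []; split_ifs <;> simp


end Multigraph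

open Multigraph in
/-- For a leaf `v` of a banana tree `G` with unique neighbor `w`,
`a = |E(v,w)|` and `G' = G - v`, we have
`f(G, v, 0) = min { 1 + f(G', w, 0), a + f(G', w, a) }`. -/
theorem fmin_leaf_recursion_zero
    {V : Type} [Fintype V] (G : Multigraph V) (hG : G.IsBananaTree)
    (v w : V) (hvw : G.underlying.Adj v w)
    (hleaf : ∀ u, G.underlying.Adj v u → u = w)
    (hne : w ≠ v) (a : ℕ) (ha : a = G.mul v w) :
    G.fmin v 0 = min (1 + (G.deleteVertex v).fmin ⟨w, hne⟩ 0)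
                     (a + (G.deleteVertex v).fmin ⟨w, hne⟩ a) := by
  classical
  have hpos : 0 < G.mul v w := hvw
  have ha1 : 1 ≤ a := by omega
  have hmul0 : ∀ u : V, u ≠ w → G.mul v u = 0 := by
    intro u hu
    by_contra h
    exact hu (hleaf u (Nat.pos_of_ne_zero h))
  have hsumv : ∀ f : V → ℤ, ∑ x, (G.mul v x : ℤ) * f x = (a : ℤ) * f w := by
    intro f
    rw [Finset.sum_eq_single w]
    · rw [ha]
    · intro x _ hx; rw [hmul0 x hx]; simp
    · intro h; exact absurd (Finset.mem_univ w) h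
  have hsub : ∀ g : V → ℤ, ∑ x : {u : V // u ≠ v}, g x.1 = (∑ x, g x) - g v := by
    intro g
    rw [eq_sub_iff_add_eq]
    have h1 : ∑ x : {u : V // u ≠ v}, g x.1 = ∑ x ∈ Finset.univ.erase v, g x :=
      (Finset.sum_subtype (Finset.univ.erase v) (fun x => by simp) g).symm
    rw [h1, Finset.sum_erase_add _ _ (Finset.mem_univ v)]
  -- the "push down to G'" map commutes with linear equivalence
  have hdown : ∀ D E : V → ℤ, G.LinEquiv D E →
      (G.deleteVertex v).LinEquiv
        (fun x : {u : V // u ≠ v} => if (x : V) = w then D w + D v else D x.1)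
        (fun x : {u : V // u ≠ v} => if (x : V) = w then E w + E v else E x.1) := by
    rintro D E ⟨σ, hσ⟩
    have h1 : ∀ u : V, ∑ x, (G.mul u x : ℤ) * (σ x - σ u) = E u - D u :=
      fun u => by rw [hσ u]; ring
    have hEv : E v - D v = (a : ℤ) * (σ w - σ v) := (h1 v).symm.trans (hsumv _)
    refine ⟨fun x => σ x.1, ?_⟩
    rintro ⟨u, hu⟩
    have hsum' : (∑ x : {t : V // t ≠ v},
        ((G.deleteVertex v).mul ⟨u, hu⟩ x : ℤ) * (σ x.1 - σ u))
        = (E u - D u) - (G.mul u v : ℤ) * (σ v - σ u) := by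
      have h3 : ∀ x ∈ (Finset.univ : Finset {t : V // t ≠ v}),
          ((G.deleteVertex v).mul ⟨u, hu⟩ x : ℤ) * (σ x.1 - σ u)
          = (fun y => (G.mul u y : ℤ) * (σ y - σ u)) x.1 := fun x _ => rfl
      rw [Finset.sum_congr rfl h3,
        hsub (fun y => (G.mul u y : ℤ) * (σ y - σ u)), h1 u]
    simp only []
    rw [hsum']
    split_ifs with hw
    · have hw' : u = w := hw
      rw [hw']
      have hmwv : (G.mul w v : ℤ) = (a : ℤ) := by rw [G.symm, ← ha]
      rw [hmwv]
      linarith [hEv]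
    · have hw' : u ≠ w := hw
      have hmuv : (G.mul u v : ℤ) = 0 := by rw [G.symm, hmul0 u hw']; simp
      rw [hmuv]
      ring
  -- lifting a G'-equivalence to G, keeping a constant value c on v
  have hup : ∀ (c : ℤ) (D' E' : {u : V // u ≠ v} → ℤ),
      (G.deleteVertex v).LinEquiv D' E' →
      G.LinEquiv (fun u => if h : u = v then c else D' ⟨u, h⟩)
                 (fun u => if h : u = v then c else E' ⟨u, h⟩) := by
    rintro c D' E' ⟨σ', hσ'⟩
    refine ⟨fun u => if h : u = v then σ' ⟨w, hne⟩ else σ' ⟨u, h⟩, fun u => ?_⟩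
    set τ : V → ℤ := fun u => if h : u = v then σ' ⟨w, hne⟩ else σ' ⟨u, h⟩ with hτ
    have hτv : τ v = σ' ⟨w, hne⟩ := by simp [hτ]
    have hτsub : ∀ x : {t : V // t ≠ v}, τ x.1 = σ' x := by
      intro x; simp [hτ, x.2]
    by_cases hu : u = v
    · subst hu
      have hz : ∑ x, (G.mul u x : ℤ) * (τ x - τ u) = 0 := by
        rw [hsumv (fun x => τ x - τ u)]
        rw [hτsub ⟨w, hne⟩, hτv]
        ring
      rw [hz]
      simp
    · have hτu : τ u = σ' ⟨u, hu⟩ := hτsub ⟨u, hu⟩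
      have hgv : (G.mul u v : ℤ) * (τ v - τ u) = 0 := by
        by_cases huw : u = w
        · have h2 : σ' ⟨u, hu⟩ = σ' ⟨w, hne⟩ := by congr 1; exact Subtype.ext huw
          rw [hτv, hτu, h2, sub_self, mul_zero]
        · have : (G.mul u v : ℤ) = 0 := by rw [G.symm, hmul0 u huw]; simp
          rw [this, zero_mul]
      have hfull : ∑ x : V, (G.mul u x : ℤ) * (τ x - τ u)
          = E' ⟨u, hu⟩ - D' ⟨u, hu⟩ := by
        have hsplit : ∑ x : V, (G.mul u x : ℤ) * (τ x - τ u)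
            = (∑ x : {t : V // t ≠ v}, (G.mul u x.1 : ℤ) * (τ x.1 - τ u))
              + (G.mul u v : ℤ) * (τ v - τ u) := by
          rw [hsub (fun x => (G.mul u x : ℤ) * (τ x - τ u))]; ring
        rw [hsplit, hgv, add_zero]
        have hc : ∀ x ∈ (Finset.univ : Finset {t : V // t ≠ v}),
            (G.mul u x.1 : ℤ) * (τ x.1 - τ u)
            = ((G.deleteVertex v).mul ⟨u, hu⟩ x : ℤ) * (σ' x - σ' ⟨u, hu⟩) := by
          intro x _; rw [hτsub x, hτu]; rfl
        rw [Finset.sum_congr rfl hc]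
        have := hσ' ⟨u, hu⟩
        linarith
      rw [hfull]
      simp only [dif_neg hu]
      ring
  -- firing v once: moves a chips from v to w
  have hfire : ∀ D' : {u : V // u ≠ v} → ℤ,
      G.LinEquiv (fun u => if h : u = v then (a : ℤ) else D' ⟨u, h⟩)
        (fun u => if h : u = v then 0 else
          (fun x : {t : V // t ≠ v} => D' x + (@ite ℤ (x = (⟨w, hne⟩ : {t : V // t ≠ v})) (Classical.propDecidable _) ((a : ℤ)) 0)) ⟨u, h⟩) := by
    intro D'
    refine ⟨fun u => if u = v then 1 else 0, fun u => ?_⟩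
    set τ : V → ℤ := fun u => if u = v then 1 else 0 with hτ
    have hτv : τ v = 1 := by simp [hτ]
    have hτsub : ∀ x : {t : V // t ≠ v}, τ x.1 = 0 := by
      intro x; simp [hτ, x.2]
    by_cases hu : u = v
    · subst hu
      have hz : ∑ x, (G.mul u x : ℤ) * (τ x - τ u) = -(a : ℤ) := by
        rw [hsumv (fun x => τ x - τ u)]
        rw [hτsub ⟨w, hne⟩, hτv]
        ring
      rw [hz]
      simp
    · have hτu : τ u = 0 := hτsub ⟨u, hu⟩
      have hfull : ∑ x : V, (G.mul u x : ℤ) * (τ x - τ u) = (G.mul u v : ℤ) := by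
        have hsplit : ∑ x : V, (G.mul u x : ℤ) * (τ x - τ u)
            = (∑ x : {t : V // t ≠ v}, (G.mul u x.1 : ℤ) * (τ x.1 - τ u))
              + (G.mul u v : ℤ) * (τ v - τ u) := by
          rw [hsub (fun x => (G.mul u x : ℤ) * (τ x - τ u))]; ring
        have hz : ∑ x : {t : V // t ≠ v}, (G.mul u x.1 : ℤ) * (τ x.1 - τ u) = 0 := by
          apply Finset.sum_eq_zero
          intro x _
          rw [hτsub x, hτu, sub_zero, mul_zero]
        rw [hsplit, hz, hτv, hτu]
        ring
      rw [hfull]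
      simp only [dif_neg hu]
      by_cases huw : u = w
      · have hcond : (⟨u, hu⟩ : {t : V // t ≠ v}) = ⟨w, hne⟩ := Subtype.ext huw
        rw [if_pos hcond]
        have : (G.mul u v : ℤ) = (a : ℤ) := by rw [G.symm, huw, ← ha]
        rw [this]
      · have hcond : (⟨u, hu⟩ : {t : V // t ≠ v}) ≠ ⟨w, hne⟩ :=
          fun h => huw (congrArg Subtype.val h)
        rw [if_neg hcond]
        have : (G.mul u v : ℤ) = 0 := by rw [G.symm, hmul0 u huw]; simp
        rw [this]
  -- degree computations
  have hdegup : ∀ (c : ℤ) (D1 : {u : V // u ≠ v} → ℤ),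
      degree (fun u : V => if h : u = v then c else D1 ⟨u, h⟩) = degree D1 + c := by
    intro c D1
    have h0 := hsub (fun u => if h : u = v then c else D1 ⟨u, h⟩)
    have h2 : ∀ x ∈ (Finset.univ : Finset {u : V // u ≠ v}),
        (if h : (x : V) = v then c else D1 ⟨x.1, h⟩) = D1 x := by
      intro x _; rw [dif_neg x.2]
    rw [Finset.sum_congr rfl h2] at h0
    have h3 : (if h : v = v then c else D1 ⟨v, h⟩) = c := by rw [dif_pos rfl]
    rw [h3] at h0
    unfold Multigraph.degree
    linarith
  have hdegdn : ∀ E : V → ℤ,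
      (∑ x : {u : V // u ≠ v}, (if (x : V) = w then E w + E v else E x.1)) = degree E := by
    intro E
    have h0 := hsub (fun u => if u = w then E w + E v else E u)
    have h3 : (if v = w then E w + E v else E v) = E v := by
      rw [if_neg (fun h => hne h.symm)]
    rw [h3] at h0
    have h4 : ∑ x : V, (if x = w then E w + E v else E x) = degree E + E v := by
      have h5 : ∀ x ∈ (Finset.univ : Finset V),
          (if x = w then E w + E v else E x) = E x + (if x = w then E v else 0) := by
        intro x _
        by_cases hx : x = w
        · rw [if_pos hx, if_pos hx, hx]
        · rw [if_neg hx, if_neg hx, add_zero]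
      have h6 : ∑ x : V, (if x = w then E v else 0) = E v := by
        rw [Finset.sum_eq_single w]
        · rw [if_pos rfl]
        · intro x _ hx; rw [if_neg hx]
        · intro h; exact absurd (Finset.mem_univ _) h
      rw [Finset.sum_congr rfl h5, Finset.sum_add_distrib, h6]
      rfl
    rw [h4] at h0
    rw [h0]; ring
  have hind : ∀ c : ℤ,
      (∑ x : {u : V // u ≠ v},
        (@ite ℤ (x = (⟨w, hne⟩ : {u : V // u ≠ v})) (Classical.propDecidable _) c 0)) = c := by
    intro c
    rw [Finset.sum_eq_single (⟨w, hne⟩ : {u : V // u ≠ v})]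
    · rw [if_pos rfl]
    · intro x _ hx; rw [if_neg hx]
    · intro h; exact absurd (Finset.mem_univ _) h
  -- witnesses attaining the two fmin values on G'
  obtain ⟨D1, hD1eff, hD1pr, hD1deg⟩ :=
    Nat.sInf_mem (fmin_set_nonempty (G.deleteVertex v) (⟨w, hne⟩ : {u : V // u ≠ v}) 0)
  obtain ⟨D2, hD2eff, hD2pr, hD2deg⟩ :=
    Nat.sInf_mem (fmin_set_nonempty (G.deleteVertex v) (⟨w, hne⟩ : {u : V // u ≠ v}) a)
  rw [shift_zero] at hD1pr
  have hD1deg' : degree D1 = ((G.deleteVertex v).fmin ⟨w, hne⟩ 0 : ℤ) := hD1deg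
  have hD2deg' : degree D2 = ((G.deleteVertex v).fmin ⟨w, hne⟩ a : ℤ) := hD2deg
  -- upper bound 1
  have hub1 : G.fmin v 0 ≤ 1 + (G.deleteVertex v).fmin ⟨w, hne⟩ 0 := by
    apply Nat.sInf_le
    refine ⟨fun u => if h : u = v then 1 else D1 ⟨u, h⟩, ?_, ?_, ?_⟩
    · intro u
      by_cases h : u = v
      · simp [h]
      · simp only [dif_neg h]; exact hD1eff ⟨u, h⟩
    · rw [shift_zero]
      intro u
      by_cases h : u = v
      · refine ⟨fun t => if ht : t = v then 1 else D1 ⟨t, ht⟩, linEquiv_refl _ _, ?_, ?_⟩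
        · intro t
          by_cases ht : t = v
          · simp [ht]
          · simp only [dif_neg ht]; exact hD1eff ⟨t, ht⟩
        · rw [h]; simp
      · obtain ⟨E1, hlin, hE1eff, hE1u⟩ := hD1pr ⟨u, h⟩
        refine ⟨fun t => if ht : t = v then 1 else E1 ⟨t, ht⟩, hup 1 D1 E1 hlin, ?_, ?_⟩
        · intro t
          by_cases ht : t = v
          · simp [ht]
          · simp only [dif_neg ht]; exact hE1eff ⟨t, ht⟩
        · simp only [dif_neg h]; exact hE1u
    · rw [hdegup 1 D1, hD1deg']; push_cast; ring
  -- upper bound 2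
  have hub2 : G.fmin v 0 ≤ a + (G.deleteVertex v).fmin ⟨w, hne⟩ a := by
    apply Nat.sInf_le
    refine ⟨fun u => if h : u = v then (a : ℤ) else D2 ⟨u, h⟩, ?_, ?_, ?_⟩
    · intro u
      by_cases h : u = v
      · simp [h]
      · simp only [dif_neg h]; exact hD2eff ⟨u, h⟩
    · rw [shift_zero]
      intro u
      by_cases h : u = v
      · refine ⟨fun t => if ht : t = v then (a : ℤ) else D2 ⟨t, ht⟩, linEquiv_refl _ _, ?_, ?_⟩
        · intro t
          by_cases ht : t = v
          · simp [ht]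
          · simp only [dif_neg ht]; exact hD2eff ⟨t, ht⟩
        · rw [h]; simpa using ha1
      · obtain ⟨E2, hlin, hE2eff, hE2u⟩ := hD2pr ⟨u, h⟩
        have hchain : G.LinEquiv (fun t => if ht : t = v then (a : ℤ) else D2 ⟨t, ht⟩)
            (fun t => if ht : t = v then 0 else E2 ⟨t, ht⟩) :=
          linEquiv_trans (hfire D2) (hup 0 _ E2 hlin)
        refine ⟨fun t => if ht : t = v then 0 else E2 ⟨t, ht⟩, hchain, ?_, ?_⟩
        · intro t
          by_cases ht : t = v
          · simp [ht]
          · simp only [dif_neg ht]; exact hE2eff ⟨t, ht⟩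
        · simp only [dif_neg h]; exact hE2u
    · rw [hdegup (a : ℤ) D2, hD2deg']; push_cast; ring
  -- lower bound
  have hlb : min (1 + (G.deleteVertex v).fmin ⟨w, hne⟩ 0)
      (a + (G.deleteVertex v).fmin ⟨w, hne⟩ a) ≤ G.fmin v 0 := by
    obtain ⟨D, hDeff, hDpr, hDdeg⟩ := Nat.sInf_mem (fmin_set_nonempty G v 0)
    rw [shift_zero] at hDpr
    have hDdeg' : degree D = (G.fmin v 0 : ℤ) := hDdeg
    obtain ⟨E, hDE, hEeff, hEv1⟩ := hDpr v
    have hEpr : G.PosRank E := by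
      intro u
      obtain ⟨F, hDF, hFe, hFu⟩ := hDpr u
      exact ⟨F, linEquiv_trans (linEquiv_symm hDE) hDF, hFe, hFu⟩
    have hEdeg : degree E = (G.fmin v 0 : ℤ) := (degree_eq_of_linEquiv hDE).trans hDdeg'
    have hEvled : E v ≤ (G.fmin v 0 : ℤ) := by
      rw [← hEdeg]
      exact Finset.single_le_sum (fun t _ => hEeff t) (Finset.mem_univ v)
    by_cases hca : (a : ℤ) ≤ E v
    · -- many chips on v: route through f(G', w, a)
      refine le_trans (min_le_right _ _) ?_
      have haN : a ≤ G.fmin v 0 := by exact_mod_cast le_trans hca hEvled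
      have hmem : (G.fmin v 0 - a) ∈ {d : ℕ | ∃ D' : {u : V // u ≠ v} → ℤ, Effective D' ∧
          (G.deleteVertex v).PosRank
            (fun u => D' u + (@ite ℤ (u = (⟨w, hne⟩ : {u : V // u ≠ v})) (Classical.propDecidable _) ((a : ℤ)) 0)) ∧
          degree D' = (d : ℤ)} := by
        refine ⟨fun x => (if (x : V) = w then E w + E v else E x.1)
            - (@ite ℤ (x = (⟨w, hne⟩ : {u : V // u ≠ v})) (Classical.propDecidable _) ((a : ℤ)) 0), ?_, ?_, ?_⟩
        · intro x
          by_cases hx : x = (⟨w, hne⟩ : {u : V // u ≠ v})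
          · have hx1 : (x : V) = w := congrArg Subtype.val hx
            show (0 : ℤ) ≤ (if (x : V) = w then E w + E v else E x.1)
              - (@ite ℤ (x = (⟨w, hne⟩ : {u : V // u ≠ v})) (Classical.propDecidable _) ((a : ℤ)) 0)
            rw [if_pos hx1, if_pos hx]
            have := hEeff w
            linarith
          · have hx1 : (x : V) ≠ w := fun h => hx (Subtype.ext h)
            show (0 : ℤ) ≤ (if (x : V) = w then E w + E v else E x.1)
              - (@ite ℤ (x = (⟨w, hne⟩ : {u : V // u ≠ v})) (Classical.propDecidable _) ((a : ℤ)) 0)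
            rw [if_neg hx1, if_neg hx, sub_zero]
            exact hEeff x.1
        · have key : (G.deleteVertex v).PosRank
              (fun x : {t : V // t ≠ v} => if (x : V) = w then E w + E v else E x.1) := by
            intro u'
            obtain ⟨F, hEF, hFeff, hFu⟩ := hEpr u'.1
            refine ⟨fun x => if (x : V) = w then F w + F v else F x.1, hdown E F hEF, ?_, ?_⟩
            · intro x
              show (0 : ℤ) ≤ if (x : V) = w then F w + F v else F x.1
              by_cases hx : (x : V) = w
              · rw [if_pos hx]
                have := hFeff w; have := hFeff v; linarith
              · rw [if_neg hx]; exact hFeff x.1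
            · show (1 : ℤ) ≤ if (u' : V) = w then F w + F v else F u'.1
              by_cases hx : (u' : V) = w
              · rw [if_pos hx]
                rw [hx] at hFu
                have := hFeff v; linarith
              · rw [if_neg hx]; exact hFu
          show (G.deleteVertex v).PosRank
            (fun u => ((if (u : V) = w then E w + E v else E u.1)
              - (@ite ℤ (u = (⟨w, hne⟩ : {u : V // u ≠ v})) (Classical.propDecidable _) ((a : ℤ)) 0))
              + (@ite ℤ (u = (⟨w, hne⟩ : {u : V // u ≠ v})) (Classical.propDecidable _) ((a : ℤ)) 0))
          have heq : (fun u : {t : V // t ≠ v} => ((if (u : V) = w then E w + E v else E u.1)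
              - (@ite ℤ (u = (⟨w, hne⟩ : {u : V // u ≠ v})) (Classical.propDecidable _) ((a : ℤ)) 0))
              + (@ite ℤ (u = (⟨w, hne⟩ : {u : V // u ≠ v})) (Classical.propDecidable _) ((a : ℤ)) 0))
              = (fun x : {t : V // t ≠ v} => if (x : V) = w then E w + E v else E x.1) := by
            funext x; ring
          rw [heq]
          exact key
        · have hdd : degree (fun x : {t : V // t ≠ v} =>
              (if (x : V) = w then E w + E v else E x.1)
              - (@ite ℤ (x = (⟨w, hne⟩ : {u : V // u ≠ v})) (Classical.propDecidable _) ((a : ℤ)) 0))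
              = (G.fmin v 0 : ℤ) - a := by
            unfold Multigraph.degree
            rw [Finset.sum_sub_distrib, hdegdn E, hind (a : ℤ), hEdeg]
          rw [hdd, Nat.cast_sub haN]
      have hfin : (G.deleteVertex v).fmin ⟨w, hne⟩ a ≤ G.fmin v 0 - a := Nat.sInf_le hmem
      have hstep := Nat.add_le_add_left hfin a
      rwa [Nat.add_sub_cancel' haN] at hstep
    · -- few chips on v: route through f(G', w, 0)
      push_neg at hca
      refine le_trans (min_le_left _ _) ?_
      have h1N : 1 ≤ G.fmin v 0 := by exact_mod_cast le_trans hEv1 hEvled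
      have hkey : ∀ F : V → ℤ, G.LinEquiv E F → Effective F → 1 ≤ F v := by
        intro F hEF hFeff
        obtain ⟨σ, hσ⟩ := hEF
        have h1 : F v = E v + (a : ℤ) * (σ w - σ v) := by
          rw [hσ v, hsumv (fun x => σ x - σ v)]
        have h2 := hFeff v
        rcases le_or_gt 0 (σ w - σ v) with h3 | h3
        · nlinarith
        · have h4 : (σ w - σ v) + 1 ≤ 0 := Int.add_one_le_iff.mpr h3
          nlinarith
      have hmem : (G.fmin v 0 - 1) ∈ {d : ℕ | ∃ D' : {u : V // u ≠ v} → ℤ, Effective D' ∧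
          (G.deleteVertex v).PosRank
            (fun u => D' u + (@ite ℤ (u = (⟨w, hne⟩ : {u : V // u ≠ v})) (Classical.propDecidable _) (((0 : ℕ) : ℤ)) 0)) ∧
          degree D' = (d : ℤ)} := by
        refine ⟨fun x => (if (x : V) = w then E w + E v else E x.1)
            - (@ite ℤ (x = (⟨w, hne⟩ : {u : V // u ≠ v})) (Classical.propDecidable _) ((1 : ℤ)) 0), ?_, ?_, ?_⟩
        · intro x
          by_cases hx : x = (⟨w, hne⟩ : {u : V // u ≠ v})
          · have hx1 : (x : V) = w := congrArg Subtype.val hx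
            show (0 : ℤ) ≤ (if (x : V) = w then E w + E v else E x.1)
              - (@ite ℤ (x = (⟨w, hne⟩ : {u : V // u ≠ v})) (Classical.propDecidable _) ((1 : ℤ)) 0)
            rw [if_pos hx1, if_pos hx]
            have := hEeff w
            linarith
          · have hx1 : (x : V) ≠ w := fun h => hx (Subtype.ext h)
            show (0 : ℤ) ≤ (if (x : V) = w then E w + E v else E x.1)
              - (@ite ℤ (x = (⟨w, hne⟩ : {u : V // u ≠ v})) (Classical.propDecidable _) ((1 : ℤ)) 0)
            rw [if_neg hx1, if_neg hx, sub_zero]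
            exact hEeff x.1
        · rw [shift_zero]
          intro u'
          obtain ⟨F, hEF, hFeff, hFu⟩ := hEpr u'.1
          have hFv := hkey F hEF hFeff
          refine ⟨fun x => (if (x : V) = w then F w + F v else F x.1)
              - (@ite ℤ (x = (⟨w, hne⟩ : {u : V // u ≠ v})) (Classical.propDecidable _) ((1 : ℤ)) 0),
            linEquiv_sub_const _ (hdown E F hEF), ?_, ?_⟩
          · intro x
            show (0 : ℤ) ≤ (if (x : V) = w then F w + F v else F x.1)
              - (@ite ℤ (x = (⟨w, hne⟩ : {u : V // u ≠ v})) (Classical.propDecidable _) ((1 : ℤ)) 0)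
            by_cases hx : x = (⟨w, hne⟩ : {u : V // u ≠ v})
            · have hx1 : (x : V) = w := congrArg Subtype.val hx
              rw [if_pos hx1, if_pos hx]
              have := hFeff w
              linarith
            · have hx1 : (x : V) ≠ w := fun h => hx (Subtype.ext h)
              rw [if_neg hx1, if_neg hx, sub_zero]
              exact hFeff x.1
          · show (1 : ℤ) ≤ (if (u' : V) = w then F w + F v else F u'.1)
              - (@ite ℤ (u' = (⟨w, hne⟩ : {u : V // u ≠ v})) (Classical.propDecidable _) ((1 : ℤ)) 0)
            by_cases hx : (u' : V) = w
            · have hx' : u' = (⟨w, hne⟩ : {u : V // u ≠ v}) := Subtype.ext hx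
              rw [if_pos hx, if_pos hx']
              rw [hx] at hFu
              linarith
            · have hx' : u' ≠ (⟨w, hne⟩ : {u : V // u ≠ v}) := fun h => hx (congrArg Subtype.val h)
              rw [if_neg hx, if_neg hx', sub_zero]
              exact hFu
        · have hdd : degree (fun x : {t : V // t ≠ v} =>
              (if (x : V) = w then E w + E v else E x.1)
              - (@ite ℤ (x = (⟨w, hne⟩ : {u : V // u ≠ v})) (Classical.propDecidable _) ((1 : ℤ)) 0))
              = (G.fmin v 0 : ℤ) - 1 := by
            unfold Multigraph.degree
            rw [Finset.sum_sub_distrib, hdegdn E, hind 1, hEdeg]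
          rw [hdd, Nat.cast_sub h1N]
          push_cast
          ring
      have hfin : (G.deleteVertex v).fmin ⟨w, hne⟩ 0 ≤ G.fmin v 0 - 1 := Nat.sInf_le hmem
      have hstep := Nat.add_le_add_left hfin 1
      rwa [Nat.add_sub_cancel' h1N] at hstep
  exact le_antisymm (le_min hub1 hub2) hlb
end
end

section
/- Let A = (a_1, ..., a_s) be a sequence of positive integers, let L = lcm(a_1, ..., a_s), and let n ≥ s·L². Then the A-monoculture banana path on n+1 vertices satisfies gon(B_{A;n}) = lcm(a_1, ..., a_s). -/
open Finset

attribute [local instance] Classical.propDecidable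

noncomputable section

section Aux
open Multigraph

variable {n : ℕ}

/-- The cut sum: number of chips on vertices `v_0, …, v_j`. -/
def cutSum (n : ℕ) (D : Fin (n+1) → ℤ) (j : ℕ) : ℤ :=
  ∑ w : Fin (n+1), if w.1 ≤ j then D w else 0

lemma cutSum_last (D : Fin (n+1) → ℤ) : cutSum n D n = Multigraph.degree D := by
  unfold cutSum Multigraph.degree
  apply Finset.sum_congr rfl
  intro w _
  rw [if_pos (Nat.lt_succ_iff.mp w.2)]

lemma cutSum_succ (D : Fin (n+1) → ℤ) {j : ℕ} (hj : j + 1 ≤ n) :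
    cutSum n D (j+1) = cutSum n D j + D ⟨j+1, by omega⟩ := by
  have key : ∀ w : Fin (n+1), (if w.1 ≤ j+1 then D w else 0)
      = (if w.1 ≤ j then D w else 0) + (if w = (⟨j+1, by omega⟩ : Fin (n+1)) then D w else 0) := by
    intro w
    by_cases h : w = (⟨j+1, by omega⟩ : Fin (n+1))
    · subst h; simp
    · have h' : w.1 ≠ j + 1 := fun hh => h (Fin.ext hh)
      by_cases h2 : w.1 ≤ j
      · have h3 : w.1 ≤ j + 1 := by omega
        simp [h, h2, h3]
      · have h3 : ¬ (w.1 ≤ j + 1) := by omega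
        simp [h, h2, h3]
  unfold cutSum
  rw [Finset.sum_congr rfl (fun w _ => key w), Finset.sum_add_distrib,
    Finset.sum_ite_eq' Finset.univ (⟨j+1, by omega⟩ : Fin (n+1)) D]
  simp

lemma cutSum_mono (D : Fin (n+1) → ℤ) (hD : Multigraph.Effective D) {i j : ℕ} (hij : i ≤ j) :
    cutSum n D i ≤ cutSum n D j := by
  apply Finset.sum_le_sum
  intro w _
  split_ifs with h1 h2 h2
  · exact le_refl _
  · omega
  · exact hD w
  · exact le_refl _

lemma cutSum_nonneg (D : Fin (n+1) → ℤ) (hD : Multigraph.Effective D) (j : ℕ) :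
    0 ≤ cutSum n D j := by
  apply Finset.sum_nonneg
  intro w _
  split_ifs with h1
  · exact hD w
  · exact le_refl _

lemma cutSum_le_degree (D : Fin (n+1) → ℤ) (hD : Multigraph.Effective D) (j : ℕ) :
    cutSum n D j ≤ Multigraph.degree D := by
  apply Finset.sum_le_sum
  intro w _
  split_ifs with h1
  · exact le_refl _
  · exact hD w

/-- The amount of chips moved across the `t`-th edge bunch by a firing script. -/
def scriptT (n : ℕ) (b : ℕ → ℕ) (σ : Fin (n+1) → ℤ) (t : ℕ) : ℤ :=
  if h : t < n then (b t : ℤ) * (σ ⟨t+1, by omega⟩ - σ ⟨t, by omega⟩) else 0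

lemma bananaPath_rowSum (b : ℕ → ℕ) (σ : Fin (n+1) → ℤ) (i : Fin (n+1)) :
    ∑ w : Fin (n+1), (((bananaPath n b).mul i w : ℤ) * (σ w - σ i))
      = scriptT n b σ i.1 - (if i.1 = 0 then 0 else scriptT n b σ (i.1 - 1)) := by
  have hmul : ∀ w : Fin (n+1), (bananaPath n b).mul i w
      = if i.1 + 1 = w.1 then b i.1 else if w.1 + 1 = i.1 then b w.1 else 0 := fun w => rfl
  have hsplit : ∀ w : Fin (n+1),
      (((bananaPath n b).mul i w : ℤ) * (σ w - σ i))
      = (if w.1 = i.1 + 1 then (b i.1 : ℤ) * (σ w - σ i) else 0)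
        + (if w.1 + 1 = i.1 then (b w.1 : ℤ) * (σ w - σ i) else 0) := by
    intro w
    rw [hmul w]
    by_cases h1 : i.1 + 1 = w.1
    · have h2 : ¬ (w.1 + 1 = i.1) := by omega
      have h3 : w.1 = i.1 + 1 := h1.symm
      rw [if_pos h1, if_pos h3, if_neg h2]
      ring
    · by_cases h2 : w.1 + 1 = i.1
      · have h3 : ¬ (w.1 = i.1 + 1) := by omega
        rw [if_neg h1, if_pos h2, if_neg h3, if_pos h2]
        ring
      · have h3 : ¬ (w.1 = i.1 + 1) := by omega
        rw [if_neg h1, if_neg h2, if_neg h3, if_neg h2]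
        push_cast
        ring
  rw [Finset.sum_congr rfl (fun w _ => hsplit w), Finset.sum_add_distrib]
  congr 1
  · -- first sum equals scriptT
    by_cases hi : i.1 < n
    · have hcond : ∀ w : Fin (n+1), (if w.1 = i.1 + 1 then (b i.1 : ℤ) * (σ w - σ i) else 0)
          = (if w = (⟨i.1+1, by omega⟩ : Fin (n+1)) then (b i.1 : ℤ) * (σ w - σ i) else 0) := by
        intro w
        congr 1
        simp [Fin.ext_iff]
      rw [Finset.sum_congr rfl (fun w _ => hcond w),
        Finset.sum_ite_eq' Finset.univ (⟨i.1+1, by omega⟩ : Fin (n+1))]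
      unfold scriptT
      rw [dif_pos hi]
      simp
    · have hin : i.1 = n := by omega
      have hcond : ∀ w : Fin (n+1), (if w.1 = i.1 + 1 then (b i.1 : ℤ) * (σ w - σ i) else 0) = 0 := by
        intro w
        rw [if_neg (by omega)]
      rw [Finset.sum_congr rfl (fun w _ => hcond w)]
      unfold scriptT
      rw [dif_neg hi]
      simp
  · -- second sum equals the negated shifted scriptT
    by_cases hi : i.1 = 0
    · have hcond : ∀ w : Fin (n+1), (if w.1 + 1 = i.1 then (b w.1 : ℤ) * (σ w - σ i) else 0) = 0 := by
        intro w
        rw [if_neg (by omega)]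
      rw [Finset.sum_congr rfl (fun w _ => hcond w)]
      simp [hi]
    · have hi2 : i.1 < n + 1 := i.2
      have hi1 : 1 ≤ i.1 := by omega
      have hcond : ∀ w : Fin (n+1), (if w.1 + 1 = i.1 then (b w.1 : ℤ) * (σ w - σ i) else 0)
          = (if w = (⟨i.1 - 1, by omega⟩ : Fin (n+1)) then (b w.1 : ℤ) * (σ w - σ i) else 0) := by
        intro w
        congr 1
        exact propext (by simp only [Fin.ext_iff]; omega)
      rw [Finset.sum_congr rfl (fun w _ => hcond w),
        Finset.sum_ite_eq' Finset.univ (⟨i.1 - 1, by omega⟩ : Fin (n+1))]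
      rw [if_neg hi]
      unfold scriptT
      rw [dif_pos (by omega : i.1 - 1 < n)]
      have hfin : (⟨i.1 - 1 + 1, by omega⟩ : Fin (n+1)) = i := by
        simp only [Fin.ext_iff]
        omega
      rw [hfin]
      simp
      ring

end Aux

section Aux2
open Multigraph

variable {n : ℕ}

lemma cutSum_script (b : ℕ → ℕ) (σ : Fin (n+1) → ℤ) (D E : Fin (n+1) → ℤ)
    (h : ∀ v, E v = D v + ∑ w : Fin (n+1), (((bananaPath n b).mul v w : ℤ) * (σ w - σ v)))
    {j : ℕ} (hj : j ≤ n) :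
    cutSum n E j = cutSum n D j + scriptT n b σ j := by
  have step1 : cutSum n E j = cutSum n D j
      + ∑ w : Fin (n+1), (if w.1 ≤ j then
          (scriptT n b σ w.1 - (if w.1 = 0 then 0 else scriptT n b σ (w.1 - 1))) else 0) := by
    unfold cutSum
    rw [← Finset.sum_add_distrib]
    apply Finset.sum_congr rfl
    intro w _
    by_cases hw : w.1 ≤ j
    · rw [if_pos hw, if_pos hw, if_pos hw, h w, bananaPath_rowSum]
    · rw [if_neg hw, if_neg hw, if_neg hw]
      ring
  rw [step1]
  congr 1
  have step2 : ∑ w : Fin (n+1), (if w.1 ≤ j then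
        (scriptT n b σ w.1 - (if w.1 = 0 then 0 else scriptT n b σ (w.1 - 1))) else 0)
      = ∑ t ∈ Finset.range (n+1), (if t ≤ j then
        (scriptT n b σ t - (if t = 0 then 0 else scriptT n b σ (t - 1))) else 0) :=
    Fin.sum_univ_eq_sum_range
      (fun t => if t ≤ j then
        (scriptT n b σ t - (if t = 0 then 0 else scriptT n b σ (t - 1))) else 0) (n+1)
  rw [step2]
  have step3 : ∑ t ∈ Finset.range (n+1), (if t ≤ j then
        (scriptT n b σ t - (if t = 0 then 0 else scriptT n b σ (t - 1))) else 0)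
      = ∑ t ∈ Finset.range (j+1), (if t ≤ j then
        (scriptT n b σ t - (if t = 0 then 0 else scriptT n b σ (t - 1))) else 0) := by
    symm
    apply Finset.sum_subset
    · apply Finset.range_subset_range.mpr
      omega
    · intro t _ ht
      rw [if_neg (by simp at ht ⊢; omega)]
  rw [step3]
  have step4 : ∑ t ∈ Finset.range (j+1), (if t ≤ j then
        (scriptT n b σ t - (if t = 0 then 0 else scriptT n b σ (t - 1))) else 0)
      = ∑ t ∈ Finset.range (j+1),
          ((fun t => if t = 0 then 0 else scriptT n b σ (t - 1)) (t+1)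
            - (fun t => if t = 0 then 0 else scriptT n b σ (t - 1)) t) := by
    apply Finset.sum_congr rfl
    intro t ht
    simp only [Finset.mem_range] at ht
    rw [if_pos (by omega)]
    simp
  rw [step4, Finset.sum_range_sub (fun t => if t = 0 then 0 else scriptT n b σ (t - 1)) (j+1)]
  simp

lemma linEquiv_cut (b : ℕ → ℕ) {D E : Fin (n+1) → ℤ}
    (h : (bananaPath n b).LinEquiv D E) :
    (∀ j, j < n → ∃ z : ℤ, cutSum n E j = cutSum n D j + (b j : ℤ) * z)
      ∧ Multigraph.degree E = Multigraph.degree D := by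
  obtain ⟨σ, hσ⟩ := h
  constructor
  · intro j hj
    refine ⟨σ ⟨j+1, by omega⟩ - σ ⟨j, by omega⟩, ?_⟩
    rw [cutSum_script b σ D E hσ (by omega : j ≤ n)]
    unfold scriptT
    rw [dif_pos hj]
  · rw [← cutSum_last, ← cutSum_last, cutSum_script b σ D E hσ (le_refl n)]
    unfold scriptT
    rw [dif_neg (lt_irrefl n)]
    ring

/-- The pointwise-minimal sequence compatible with residues `c j mod b j`. -/
def mseq (b : ℕ → ℕ) (c : ℕ → ℤ) : ℕ → ℤ
  | 0 => 0
  | j+1 => mseq b c j + (c j - mseq b c j) % (b j)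

lemma mseq_le_succ (b : ℕ → ℕ) (c : ℕ → ℤ) {j : ℕ} (hb : 0 < b j) :
    mseq b c j ≤ mseq b c (j+1) := by
  have hbne : ((b j : ℤ)) ≠ 0 := by exact_mod_cast hb.ne'
  have h := Int.emod_nonneg (c j - mseq b c j) hbne
  show mseq b c j ≤ mseq b c j + (c j - mseq b c j) % (b j)
  linarith

lemma mseq_dvd (b : ℕ → ℕ) (c : ℕ → ℤ) (j : ℕ) :
    (b j : ℤ) ∣ (c j - mseq b c (j+1)) := by
  show (b j : ℤ) ∣ (c j - (mseq b c j + (c j - mseq b c j) % (b j)))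
  refine ⟨(c j - mseq b c j) / (b j), ?_⟩
  have h := Int.emod_add_mul_ediv (c j - mseq b c j) (b j)
  linarith

lemma mseq_min (b : ℕ → ℕ) (c : ℕ → ℤ) {j : ℕ} {x : ℤ} (hb : 0 < b j)
    (hdvd : (b j : ℤ) ∣ (c j - x)) (hx : mseq b c j ≤ x) :
    mseq b c (j+1) ≤ x := by
  have hbne : ((b j : ℤ)) ≠ 0 := by exact_mod_cast hb.ne'
  have hmod : (c j - mseq b c j) % (b j : ℤ) = (x - mseq b c j) % (b j : ℤ) := by
    have h1 : x ≡ c j [ZMOD (b j : ℤ)] := (Int.modEq_iff_dvd.mpr hdvd)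
    exact (Int.ModEq.sub_right (mseq b c j) h1).symm
  have h2 : (0:ℤ) ≤ x - mseq b c j := by linarith
  have h3 : (x - mseq b c j) % (b j : ℤ) ≤ x - mseq b c j := by
    have h4 : (x - mseq b c j) % (b j : ℤ)
        = (x - mseq b c j) - (b j : ℤ) * ((x - mseq b c j) / (b j : ℤ)) := by
      rw [Int.emod_def]
    have h5 : (0:ℤ) ≤ (b j : ℤ) * ((x - mseq b c j) / (b j : ℤ)) :=
      mul_nonneg (by positivity) (Int.ediv_nonneg h2 (by positivity))
    linarith
  show mseq b c j + (c j - mseq b c j) % (b j) ≤ x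
  rw [hmod]
  linarith

lemma mseq_nonneg (b : ℕ → ℕ) (c : ℕ → ℤ) (hb : ∀ j, 0 < b j) (j : ℕ) :
    0 ≤ mseq b c j := by
  induction j with
  | zero => exact le_refl 0
  | succ j ih => exact le_trans ih (mseq_le_succ b c (hb j))

/-- A bounded nondecreasing integer sequence has a long constant run. -/
lemma exists_const_run (f : ℕ → ℤ) (N r M : ℕ) (lo : ℤ)
    (mono : ∀ i, i < N → f i ≤ f (i+1))
    (hlo : ∀ i, i ≤ N → lo ≤ f i)
    (hhi : ∀ i, i ≤ N → f i ≤ lo + M)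
    (hr : (M+1) * r ≤ N) :
    ∃ p, p + r ≤ N ∧ ∀ t, t ≤ r → f (p + t) = f p := by
  have mono' : ∀ i j, i ≤ j → j ≤ N → f i ≤ f j := by
    intro i j hij hjN
    induction j with
    | zero => have h0 : i = 0 := by omega
              rw [h0]
    | succ j ih =>
      rcases Nat.lt_or_ge i (j+1) with h | h
      · exact le_trans (ih (by omega) (by omega)) (mono j (by omega))
      · have h0 : i = j+1 := by omega
        rw [h0]
  by_cases hex : ∃ j, j ≤ M ∧ f (j*r) = f ((j+1)*r)
  · obtain ⟨j, hj, heq⟩ := hex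
    have hle : (j+1)*r ≤ N := le_trans (Nat.mul_le_mul_right r (by omega)) hr
    refine ⟨j*r, by nlinarith, ?_⟩
    intro t ht
    have l1 : f (j*r) ≤ f (j*r + t) := mono' _ _ (by omega) (by nlinarith)
    have l2 : f (j*r + t) ≤ f ((j+1)*r) := mono' _ _ (by nlinarith) hle
    linarith [heq.symm.le, heq.le]
  · push_neg at hex
    exfalso
    have grow : ∀ j, j ≤ M + 1 → lo + j ≤ f (j * r) := by
      intro j
      induction j with
      | zero => intro _; simpa using hlo 0 (by omega)
      | succ j ih =>
        intro hj
        have h1 : lo + j ≤ f (j*r) := ih (by omega)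
        have hle : (j+1)*r ≤ N := le_trans (Nat.mul_le_mul_right r (by omega)) hr
        have h2 : f (j*r) ≤ f ((j+1)*r) := mono' _ _ (by nlinarith) hle
        have h3 : f (j*r) ≠ f ((j+1)*r) := hex j (by omega)
        have h4 : f (j*r) + 1 ≤ f ((j+1)*r) := by
          rcases lt_or_eq_of_le h2 with h | h
          · omega
          · exact absurd h h3
        push_cast
        push_cast at h1
        linarith
    have hend := grow (M+1) (le_refl _)
    have hbound := hhi ((M+1)*r) hr
    push_cast at hend
    linarith

end Aux2

section Aux3
open Multigraph

variable {n : ℕ}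

lemma posRank_concentrated (b : ℕ → ℕ) (L : ℕ) (hL : 0 < L) (hdvd : ∀ t, b t ∣ L) :
    (bananaPath n b).PosRank (fun v => if v = (⟨0, by omega⟩ : Fin (n+1)) then (L:ℤ) else 0) := by
  intro v
  refine ⟨(fun u => if u = v then (L:ℤ) else 0), ?_, ?_, ?_⟩
  · refine ⟨fun u => ∑ t ∈ Finset.Ico u.1 v.1, ((L / b t : ℕ) : ℤ), ?_⟩
    intro u
    rw [bananaPath_rowSum]
    have hT : ∀ t : ℕ,
        scriptT n b (fun u => ∑ t ∈ Finset.Ico u.1 v.1, ((L / b t : ℕ) : ℤ)) t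
          = if t < v.1 then -(L:ℤ) else 0 := by
      intro t
      unfold scriptT
      by_cases ht : t < n
      · rw [dif_pos ht]
        by_cases htk : t < v.1
        · rw [if_pos htk]
          have hsum : ∑ x ∈ Finset.Ico t v.1, ((L / b x : ℕ) : ℤ)
              = ((L / b t : ℕ) : ℤ) + ∑ x ∈ Finset.Ico (t+1) v.1, ((L / b x : ℕ) : ℤ) :=
            Finset.sum_eq_sum_Ico_succ_bot htk _
          have hbt : ((b t : ℤ)) * ((L / b t : ℕ) : ℤ) = (L : ℤ) := by
            exact_mod_cast congrArg (Nat.cast : ℕ → ℤ) (Nat.mul_div_cancel' (hdvd t))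
          simp only []
          rw [hsum]
          ring_nf
          linear_combination -hbt
        · rw [if_neg htk]
          have e1 : Finset.Ico (t+1) v.1 = ∅ := Finset.Ico_eq_empty (by omega)
          have e2 : Finset.Ico t v.1 = ∅ := Finset.Ico_eq_empty (by omega)
          simp only []
          rw [e1, e2]
          simp
      · rw [dif_neg ht]
        have hv : v.1 < n + 1 := v.2
        rw [if_neg (by omega)]
    rw [hT, hT]
    have hv : v.1 < n + 1 := v.2
    have hu : u.1 < n + 1 := u.2
    simp only [Fin.ext_iff]
    split_ifs <;> omega
  · intro u
    dsimp only
    split_ifs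
    · exact_mod_cast Nat.zero_le L
    · exact le_refl 0
  · dsimp only
    rw [if_pos rfl]
    exact_mod_cast hL

lemma effective_concentrated (L : ℕ) :
    Multigraph.Effective (fun v => if v = (⟨0, by omega⟩ : Fin (n+1)) then (L:ℤ) else 0) := by
  intro u
  dsimp only
  split_ifs
  · exact_mod_cast Nat.zero_le L
  · exact le_refl 0

lemma degree_concentrated (L : ℕ) :
    Multigraph.degree (fun v => if v = (⟨0, by omega⟩ : Fin (n+1)) then (L:ℤ) else 0) = (L:ℤ) := by
  unfold Multigraph.degree
  rw [Finset.sum_ite_eq' Finset.univ (⟨0, by omega⟩ : Fin (n+1)) (fun _ => (L:ℤ))]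
  simp

end Aux3

section Aux4
open Multigraph

lemma gonality_lower (s : ℕ) (hs : 0 < s) (a : ℕ → ℕ) (ha : ∀ i < s, 0 < a i)
    (n : ℕ) (hn : s * ((Finset.range s).lcm a) ^ 2 ≤ n)
    (D : Fin (n+1) → ℤ) (hD : Multigraph.Effective D)
    (hpr : (bananaPath n (fun i => a (i % s))).PosRank D)
    (d : ℕ) (hd : Multigraph.degree D = (d:ℤ)) :
    (Finset.range s).lcm a ≤ d := by
  set L := (Finset.range s).lcm a with hLdef
  set b : ℕ → ℕ := fun i => a (i % s) with hbdef
  have hb : ∀ t, 0 < b t := fun t => ha _ (Nat.mod_lt t hs)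
  have hL1 : 1 ≤ L := by
    rcases Nat.eq_zero_or_pos L with h0 | h1
    · exfalso
      rw [hLdef, Finset.lcm_eq_zero_iff] at h0
      obtain ⟨i, hi, hai⟩ := h0
      simp only [Finset.coe_range, Set.mem_Iio, Finset.mem_range] at hi
      have := ha i hi
      omega
    · exact h1
  have hn1 : 1 ≤ n := by
    have h := Nat.mul_le_mul hs (Nat.one_le_pow 2 L hL1)
    exact le_trans (by simpa using h) hn
  by_contra hlt
  push_neg at hlt
  -- d ≥ 1
  have hd1 : 1 ≤ d := by
    by_contra h0
    push_neg at h0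
    obtain ⟨E, hEq, hEeff, hEv⟩ := hpr ⟨0, by omega⟩
    have hdegE : Multigraph.degree E = Multigraph.degree D := (linEquiv_cut b hEq).2
    have h1 : (1:ℤ) ≤ Multigraph.degree E :=
      le_trans hEv (Finset.single_le_sum (fun i _ => hEeff i) (Finset.mem_univ _))
    rw [hdegE, hd] at h1
    omega
  have hL2 : 2 ≤ L := by omega
  set SL := s * L with hSLdef
  have hsl1 : 1 ≤ SL := by rw [hSLdef]; exact Nat.mul_le_mul hs hL1
  have hsl2 : 2 ≤ SL := by
    rw [hSLdef]
    calc 2 = 1 * 2 := by omega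
    _ ≤ s * L := Nat.mul_le_mul hs hL2
  set c : ℕ → ℤ := fun j => cutSum n D j with hcdef
  set m : ℕ → ℤ := mseq b c with hmdef
  have hm_mono : ∀ j, m j ≤ m (j+1) := by
    intro j
    rw [hmdef]
    exact mseq_le_succ b c (hb j)
  have hm_nonneg : ∀ j, 0 ≤ m j := by
    intro j
    rw [hmdef]
    exact mseq_nonneg b c hb j
  -- lower bound for cut sums of any effective equivalent divisor
  have hmE : ∀ (E : Fin (n+1) → ℤ), Multigraph.Effective E →
      (bananaPath n b).LinEquiv D E → ∀ j, j < n → m (j+1) ≤ cutSum n E j := by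
    intro E hEeff hEq j
    have hmod := (linEquiv_cut b hEq).1
    rw [hmdef]
    induction j with
    | zero =>
      intro h0
      apply mseq_min b c (hb 0)
      · obtain ⟨z, hz⟩ := hmod 0 h0
        refine ⟨-z, ?_⟩
        rw [hz]
        have hc0 : c 0 = cutSum n D 0 := rfl
        rw [hc0]
        ring
      · rw [show mseq b c 0 = 0 from rfl]
        exact cutSum_nonneg E hEeff 0
    | succ j ih =>
      intro hjn
      apply mseq_min b c (hb (j+1))
      · obtain ⟨z, hz⟩ := hmod (j+1) hjn
        refine ⟨-z, ?_⟩
        rw [hz]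
        have hc0 : c (j+1) = cutSum n D (j+1) := rfl
        rw [hc0]
        ring
      · exact le_trans (ih (by omega)) (cutSum_mono E hEeff (by omega))
  have hself : (bananaPath n b).LinEquiv D D := ⟨fun _ => 0, by intro v; simp⟩
  have hm_le_d : ∀ j, j < n → m (j+1) ≤ (d:ℤ) := by
    intro j hj
    exact le_trans (hmE D hD hself j hj)
      (le_trans (cutSum_le_degree D hD j) (le_of_eq hd))
  -- first pigeonhole run
  have hcount1 : (d+1) * (SL - 1) ≤ n - 1 := by
    apply Nat.le_sub_of_add_le
    rw [hSLdef]
    have hdL : (d:ℤ) + 1 ≤ (L:ℤ) := by exact_mod_cast hlt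
    have hsl : (1:ℤ) ≤ (s:ℤ) * L := by exact_mod_cast (hSLdef ▸ hsl1)
    have hnz : (s:ℤ) * (L:ℤ)^2 ≤ (n:ℤ) := by exact_mod_cast hn
    have hL1' : (1:ℤ) ≤ (L:ℤ) := by exact_mod_cast hL1
    zify [show 1 ≤ s * L from hSLdef ▸ hsl1]
    nlinarith [mul_nonneg (sub_nonneg.mpr hdL) (sub_nonneg.mpr hsl)]
  obtain ⟨p, hpN, hpconst⟩ := exists_const_run (fun j => m (j+1)) (n-1) (SL-1) d 0
    (fun i _ => hm_mono (i+1))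
    (fun i _ => hm_nonneg (i+1))
    (fun i hi => by simpa using hm_le_d i (by omega))
    hcount1
  set u := m (p+1) with hudef
  set k := p + 1 with hkdef
  have hkn : k + (SL - 2) ≤ n - 1 := by omega
  obtain ⟨E, hEq, hEeff, hEk⟩ := hpr ⟨k, by omega⟩
  have hdegE : Multigraph.degree E = (d:ℤ) := by rw [(linEquiv_cut b hEq).2, hd]
  have hcutle : ∀ j, cutSum n E j ≤ (d:ℤ) := by
    intro j
    rw [← hdegE]
    exact cutSum_le_degree E hEeff j
  have hconstm : ∀ t, t ≤ SL - 1 → m (p + t + 1) = u := by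
    intro t ht
    exact hpconst t ht
  have hlow2 : ∀ t, t ≤ SL - 2 → u + 1 ≤ cutSum n E (k + t) := by
    intro t ht
    have h1 : u ≤ cutSum n E p := by
      rw [hudef]
      exact hmE E hEeff hEq p (by omega)
    have h2 : cutSum n E k = cutSum n E p + E ⟨k, by omega⟩ := cutSum_succ E (by omega)
    have hEk2 : (1:ℤ) ≤ E ⟨k, by omega⟩ := hEk
    have h3 : u + 1 ≤ cutSum n E k := by rw [h2]; linarith
    exact le_trans h3 (cutSum_mono E hEeff (by omega))
  have hdvd2 : ∀ t, t ≤ SL - 2 → (b (k+t) : ℤ) ∣ (cutSum n E (k+t) - u) := by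
    intro t ht
    have hj : k + t < n := by omega
    obtain ⟨z, hz⟩ := (linEquiv_cut b hEq).1 (k+t) hj
    obtain ⟨y, hy⟩ := mseq_dvd b c (k+t)
    have h6 : m (k+t+1) = u := by
      have h7 := hconstm (t+1) (by omega)
      rw [← h7]
      congr 1
      omega
    rw [hmdef] at h6
    refine ⟨z + y, ?_⟩
    have hy' : c (k+t) - mseq b c (k+t+1) = (b (k+t) : ℤ) * y := hy
    rw [h6] at hy'
    have hc0 : c (k+t) = cutSum n D (k+t) := rfl
    rw [hc0] at hy'
    rw [hz]
    linear_combination hy'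
  -- second pigeonhole run
  have hcount2 : ((d-1)+1) * (s-1) ≤ SL - 2 := by
    have h1 : (d-1)+1 = d := by omega
    rw [h1, hSLdef]
    have hdL : (d:ℤ) ≤ (L:ℤ) - 1 := by
      have : (d:ℤ) < (L:ℤ) := by exact_mod_cast hlt
      omega
    have hs' : (1:ℤ) ≤ (s:ℤ) := by exact_mod_cast hs
    have hL2' : (2:ℤ) ≤ (L:ℤ) := by exact_mod_cast hL2
    zify [hs, show 2 ≤ s * L from hSLdef ▸ hsl2]
    nlinarith [mul_nonneg (sub_nonneg.mpr (by linarith : (d:ℤ) ≤ (L:ℤ) - 1))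
      (sub_nonneg.mpr hs')]
  obtain ⟨q, hqN, hqconst⟩ := exists_const_run (fun t => cutSum n E (k+t)) (SL-2) (s-1) (d-1) (u+1)
    (fun i _ => cutSum_mono E hEeff (by omega))
    (fun i hi => hlow2 i hi)
    (fun i hi => by
      have h1 := hcutle (k+i)
      have h2 : (0:ℤ) ≤ u := by rw [hudef]; exact hm_nonneg (p+1)
      have h3 : ((d-1:ℕ):ℤ) = (d:ℤ) - 1 := by omega
      rw [h3]
      linarith)
    hcount2
  set w : ℤ := cutSum n E (k+q) - u with hwdef
  have hw1 : 1 ≤ w := by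
    have := hlow2 q (by omega)
    rw [hwdef]
    omega
  have hwd : w ≤ (d:ℤ) := by
    have h1 := hcutle (k+q)
    have h2 : (0:ℤ) ≤ u := by rw [hudef]; exact hm_nonneg (p+1)
    rw [hwdef]
    omega
  have hwdvd : ∀ t, t ≤ s-1 → (b (k+q+t) : ℤ) ∣ w := by
    intro t ht
    have h7 : cutSum n E (k+(q+t)) = cutSum n E (k+q) := hqconst t ht
    have h8 := hdvd2 (q+t) (by omega)
    rw [show k+(q+t) = k+q+t from by omega] at h8 h7
    rw [h7] at h8
    rwa [← hwdef] at h8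
  have hres : ∀ r0, r0 < s → (a r0 : ℤ) ∣ w := by
    intro r0 hr0
    set base := (k+q) % s with hbase_def
    have hbase : base < s := Nat.mod_lt _ hs
    set t := if base ≤ r0 then r0 - base else r0 + s - base with htdef
    have ht : t ≤ s - 1 := by rw [htdef]; split_ifs <;> omega
    obtain ⟨cc, hcc⟩ : ∃ cc, k+q = s*cc + base := ⟨(k+q)/s, by rw [hbase_def, Nat.div_add_mod]⟩
    have hmodeq : (k+q+t) % s = r0 := by
      by_cases hcase : base ≤ r0
      · have he : k+q+t = s*cc + r0 := by rw [htdef, if_pos hcase]; omega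
        rw [he, Nat.mul_add_mod, Nat.mod_eq_of_lt hr0]
      · have he : k+q+t = s*(cc+1) + r0 := by
          rw [htdef, if_neg hcase]
          have h12 : s*(cc+1) = s*cc + s := by ring
          omega
        rw [he, Nat.mul_add_mod, Nat.mod_eq_of_lt hr0]
    have h9 := hwdvd t ht
    have h10 : b (k+q+t) = a r0 := by rw [hbdef]; simp only []; rw [hmodeq]
    rwa [h10] at h9
  -- conclude L ∣ w and contradiction
  have hwnn : (0:ℤ) ≤ w := by linarith
  have hwnat : ∀ r0 ∈ Finset.range s, a r0 ∣ w.toNat := by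
    intro r0 hr
    have h11 := hres r0 (Finset.mem_range.mp hr)
    have h12 : ((w.toNat : ℤ)) = w := Int.toNat_of_nonneg hwnn
    rw [← h12] at h11
    exact_mod_cast h11
  have hLdvd : L ∣ w.toNat := by rw [hLdef]; exact Finset.lcm_dvd hwnat
  have hLle : L ≤ w.toNat := Nat.le_of_dvd (by omega) hLdvd
  have hfin : w.toNat ≤ d := by omega
  omega

end Aux4


open Multigraph in
/-- If `L = lcm(a_1, …, a_s)` and `n ≥ s·L²`, then the `A`-monoculture
banana path on `n+1` vertices has gonality exactly `L`. -/
theorem monoculture_gonality_eq_lcm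
    (s : ℕ) (hs : 0 < s) (a : ℕ → ℕ) (ha : ∀ i < s, 0 < a i)
    (n : ℕ) (hn : s * ((Finset.range s).lcm a) ^ 2 ≤ n) :
    (bananaPath n (fun i => a (i % s))).gonality = (Finset.range s).lcm a := by
  have hL1 : 0 < (Finset.range s).lcm a := by
    rcases Nat.eq_zero_or_pos ((Finset.range s).lcm a) with h0 | h1
    · exfalso
      rw [Finset.lcm_eq_zero_iff] at h0
      obtain ⟨i, hi, hai⟩ := h0
      simp only [Finset.coe_range, Set.mem_Iio, Finset.mem_range] at hi
      have := ha i hi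
      omega
    · exact h1
  have hdvd : ∀ t : ℕ, (fun i => a (i % s)) t ∣ (Finset.range s).lcm a := fun t =>
    Finset.dvd_lcm (Finset.mem_range.mpr (Nat.mod_lt t hs))
  have hmem : (Finset.range s).lcm a ∈ {d : ℕ | ∃ D : Fin (n+1) → ℤ,
      Multigraph.Effective D ∧ (bananaPath n (fun i => a (i % s))).PosRank D ∧
      Multigraph.degree D = (d:ℤ)} :=
    ⟨_, effective_concentrated ((Finset.range s).lcm a),
      posRank_concentrated (fun i => a (i % s)) ((Finset.range s).lcm a) hL1 hdvd,
      degree_concentrated ((Finset.range s).lcm a)⟩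
  unfold Multigraph.gonality
  apply le_antisymm
  · exact Nat.sInf_le hmem
  · apply le_csInf ⟨_, hmem⟩
    rintro d ⟨D, h1, h2, h3⟩
    exact gonality_lower s hs a ha n hn D h1 h2 d h3
end
end

section
/- The banana path B_{(3,3,3)} (four vertices v_0, v_1, v_2, v_3 with 3 edges between each consecutive pair) has gonality 3, and the banana path B_{(3,2,3)} obtained from it by deleting one edge of the middle edge bunch has gonality 4. -/
open Finset

attribute [local instance] Classical.propDecidable

noncomputable section

open Multigraph

private lemma fin4_vals : ((3:Fin 4)).val = 3 ∧ ((2:Fin 4)).val = 2 ∧ ((1:Fin 4)).val = 1 ∧ ((0:Fin 4)).val = 0 := by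
  refine ⟨rfl, rfl, rfl, rfl⟩

private lemma expand333 (D D' : Fin 4 → ℤ)
    (h : (bananaPath 3 (fun _ => 3)).LinEquiv D D') :
    ∃ x y z : ℤ,
      D' 0 = D 0 + 3 * x ∧ D' 1 = D 1 - 3 * x + 3 * y ∧
      D' 2 = D 2 - 3 * y + 3 * z ∧ D' 3 = D 3 - 3 * z := by
  obtain ⟨σ, hσ⟩ := h
  refine ⟨σ 1 - σ 0, σ 2 - σ 1, σ 3 - σ 2, ?_, ?_, ?_, ?_⟩
  · have := hσ 0
    simp [bananaPath, Fin.sum_univ_four, fin4_vals.1, fin4_vals.2.1, fin4_vals.2.2.1,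
      fin4_vals.2.2.2] at this
    linarith
  · have := hσ 1
    simp [bananaPath, Fin.sum_univ_four, fin4_vals.1, fin4_vals.2.1, fin4_vals.2.2.1,
      fin4_vals.2.2.2] at this
    linarith
  · have := hσ 2
    simp [bananaPath, Fin.sum_univ_four, fin4_vals.1, fin4_vals.2.1, fin4_vals.2.2.1,
      fin4_vals.2.2.2] at this
    linarith
  · have := hσ 3
    simp [bananaPath, Fin.sum_univ_four, fin4_vals.1, fin4_vals.2.1, fin4_vals.2.2.1,
      fin4_vals.2.2.2] at this
    linarith

private lemma expand323 (D D' : Fin 4 → ℤ)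
    (h : (bananaPath 3 (fun i => if i = 1 then 2 else 3)).LinEquiv D D') :
    ∃ x y z : ℤ,
      D' 0 = D 0 + 3 * x ∧ D' 1 = D 1 - 3 * x + 2 * y ∧
      D' 2 = D 2 - 2 * y + 3 * z ∧ D' 3 = D 3 - 3 * z := by
  obtain ⟨σ, hσ⟩ := h
  refine ⟨σ 1 - σ 0, σ 2 - σ 1, σ 3 - σ 2, ?_, ?_, ?_, ?_⟩
  · have := hσ 0
    simp [bananaPath, Fin.sum_univ_four, fin4_vals.1, fin4_vals.2.1, fin4_vals.2.2.1,
      fin4_vals.2.2.2] at this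
    linarith
  · have := hσ 1
    simp [bananaPath, Fin.sum_univ_four, fin4_vals.1, fin4_vals.2.1, fin4_vals.2.2.1,
      fin4_vals.2.2.2] at this
    linarith
  · have := hσ 2
    simp [bananaPath, Fin.sum_univ_four, fin4_vals.1, fin4_vals.2.1, fin4_vals.2.2.1,
      fin4_vals.2.2.2] at this
    linarith
  · have := hσ 3
    simp [bananaPath, Fin.sum_univ_four, fin4_vals.1, fin4_vals.2.1, fin4_vals.2.2.1,
      fin4_vals.2.2.2] at this
    linarith

private lemma mkLin333 (D D' : Fin 4 → ℤ) (σ : Fin 4 → ℤ)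
    (h0 : D' 0 = D 0 + 3 * (σ 1 - σ 0))
    (h1 : D' 1 = D 1 + 3 * (σ 0 - σ 1) + 3 * (σ 2 - σ 1))
    (h2 : D' 2 = D 2 + 3 * (σ 1 - σ 2) + 3 * (σ 3 - σ 2))
    (h3 : D' 3 = D 3 + 3 * (σ 2 - σ 3)) :
    (bananaPath 3 (fun _ => 3)).LinEquiv D D' := by
  refine ⟨σ, ?_⟩
  intro v
  fin_cases v <;>
    simp [bananaPath, Fin.sum_univ_four, fin4_vals.1, fin4_vals.2.1, fin4_vals.2.2.1,
      fin4_vals.2.2.2] <;>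
    linarith


private lemma mkLin323 (D D' : Fin 4 → ℤ) (σ : Fin 4 → ℤ)
    (h0 : D' 0 = D 0 + 3 * (σ 1 - σ 0))
    (h1 : D' 1 = D 1 + 3 * (σ 0 - σ 1) + 2 * (σ 2 - σ 1))
    (h2 : D' 2 = D 2 + 2 * (σ 1 - σ 2) + 3 * (σ 3 - σ 2))
    (h3 : D' 3 = D 3 + 3 * (σ 2 - σ 3)) :
    (bananaPath 3 (fun i => if i = 1 then 2 else 3)).LinEquiv D D' := by
  refine ⟨σ, ?_⟩
  intro v
  fin_cases v <;>
    simp [bananaPath, Fin.sum_univ_four, fin4_vals.1, fin4_vals.2.1, fin4_vals.2.2.1,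
      fin4_vals.2.2.2] <;>
    linarith

set_option maxHeartbeats 1000000

private lemma vert333 (d D e0 e1 e2 e3 : ℤ) (h0 : 0 ≤ e0) (h1 : 0 ≤ e1) (h2 : 0 ≤ e2)
    (h3 : 0 ≤ e3) (hs : e0 + e1 + e2 + e3 = d) (hd : d ≤ 2)
    (hm : e1 % 3 = D % 3) (hc : 1 ≤ e1) (hD : 0 ≤ D) : 1 ≤ D := by omega

private lemma cov_fact333 (d D0 D1 D2 D3 e0 e1 e2 e3 x y z : ℤ)
    (hdeg : D0 + D1 + D2 + D3 = d)
    (h0 : e0 = D0 + 3 * x) (h1 : e1 = D1 - 3 * x + 3 * y)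
    (h2 : e2 = D2 - 3 * y + 3 * z) (h3 : e3 = D3 - 3 * z) :
    e0 % 3 = D0 % 3 ∧ e1 % 3 = D1 % 3 ∧ e2 % 3 = D2 % 3 ∧ e3 % 3 = D3 % 3 ∧
      e0 + e1 + e2 + e3 = d := by omega

private lemma claim0_323 (d D0 D1 D2 D3 e0 e1 e2 e3 f0 f1 f2 f3 : ℤ)
    (hD0 : 0 ≤ D0) (hD1 : 0 ≤ D1) (hD2 : 0 ≤ D2) (hD3 : 0 ≤ D3)
    (hd : d ≤ 3) (hdeg : D0 + D1 + D2 + D3 = d)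
    (he0 : 0 ≤ e0) (he1 : 0 ≤ e1) (he2 : 0 ≤ e2) (he3 : 0 ≤ e3)
    (hes : e0 + e1 + e2 + e3 = d) (hec : 1 ≤ e0)
    (hem0 : e0 % 3 = D0 % 3) (hem3 : e3 % 3 = D3 % 3) (hep : (e0 + e1) % 2 = (D0 + D1) % 2)
    (hf0 : 0 ≤ f0) (hf1 : 0 ≤ f1) (hf2 : 0 ≤ f2) (hf3 : 0 ≤ f3)
    (hfs : f0 + f1 + f2 + f3 = d) (hfc : 1 ≤ f3)
    (hfm0 : f0 % 3 = D0 % 3) (hfm3 : f3 % 3 = D3 % 3) (hfp : (f0 + f1) % 2 = (D0 + D1) % 2) :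
    1 ≤ D0 ∧ D0 ≤ 2 ∧ 1 ≤ D3 ∧ D3 ≤ 2 := by omega

private lemma claimMid_323 (d D0 D1 D2 D3 e0 e1 e2 e3 f0 f1 f2 f3 : ℤ)
    (hD0 : 1 ≤ D0) (hD0' : D0 ≤ 2) (hD1 : 0 ≤ D1) (hD2 : 0 ≤ D2)
    (hD3 : 1 ≤ D3) (hD3' : D3 ≤ 2)
    (hd : d ≤ 3) (hdeg : D0 + D1 + D2 + D3 = d)
    (he0 : 0 ≤ e0) (he1 : 0 ≤ e1) (he2 : 0 ≤ e2) (he3 : 0 ≤ e3)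
    (hes : e0 + e1 + e2 + e3 = d) (hec : 1 ≤ e1)
    (hem0 : e0 % 3 = D0 % 3) (hem3 : e3 % 3 = D3 % 3) (hep : (e0 + e1) % 2 = (D0 + D1) % 2)
    (hf0 : 0 ≤ f0) (hf1 : 0 ≤ f1) (hf2 : 0 ≤ f2) (hf3 : 0 ≤ f3)
    (hfs : f0 + f1 + f2 + f3 = d) (hfc : 1 ≤ f2)
    (hfm0 : f0 % 3 = D0 % 3) (hfm3 : f3 % 3 = D3 % 3) (hfp : (f0 + f1) % 2 = (D0 + D1) % 2) :
    False := by omega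

private lemma cov_fact323 (d D0 D1 D2 D3 e0 e1 e2 e3 x y z : ℤ)
    (hdeg : D0 + D1 + D2 + D3 = d)
    (h0 : e0 = D0 + 3 * x) (h1 : e1 = D1 - 3 * x + 2 * y)
    (h2 : e2 = D2 - 2 * y + 3 * z) (h3 : e3 = D3 - 3 * z) :
    e0 % 3 = D0 % 3 ∧ e3 % 3 = D3 % 3 ∧ (e0 + e1) % 2 = (D0 + D1) % 2 ∧
      e0 + e1 + e2 + e3 = d := by omega

private lemma lower333 (D : Fin 4 → ℤ) (hE : ∀ v, 0 ≤ D v)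
    (hPR : (bananaPath 3 (fun _ => 3)).PosRank D) (d : ℤ) (hd : d ≤ 2)
    (hdeg : D 0 + D 1 + D 2 + D 3 = d) : False := by
  obtain ⟨E0, hL0, hF0, h10⟩ := hPR 0
  obtain ⟨E1, hL1, hF1, h11⟩ := hPR 1
  obtain ⟨E2, hL2, hF2, h12⟩ := hPR 2
  obtain ⟨E3, hL3, hF3, h13⟩ := hPR 3
  obtain ⟨x0, y0, z0, a00, a01, a02, a03⟩ := expand333 D E0 hL0
  obtain ⟨x1, y1, z1, a10, a11, a12, a13⟩ := expand333 D E1 hL1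
  obtain ⟨x2, y2, z2, a20, a21, a22, a23⟩ := expand333 D E2 hL2
  obtain ⟨x3, y3, z3, a30, a31, a32, a33⟩ := expand333 D E3 hL3
  obtain ⟨c00, c01, c02, c03, c0s⟩ :=
    cov_fact333 d (D 0) (D 1) (D 2) (D 3) _ _ _ _ _ _ _ hdeg a00 a01 a02 a03
  obtain ⟨c10, c11, c12, c13, c1s⟩ :=
    cov_fact333 d (D 0) (D 1) (D 2) (D 3) _ _ _ _ _ _ _ hdeg a10 a11 a12 a13
  obtain ⟨c20, c21, c22, c23, c2s⟩ :=
    cov_fact333 d (D 0) (D 1) (D 2) (D 3) _ _ _ _ _ _ _ hdeg a20 a21 a22 a23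
  obtain ⟨c30, c31, c32, c33, c3s⟩ :=
    cov_fact333 d (D 0) (D 1) (D 2) (D 3) _ _ _ _ _ _ _ hdeg a30 a31 a32 a33
  have k0 : 1 ≤ D 0 :=
    vert333 d (D 0) (E0 1) (E0 0) (E0 2) (E0 3) (hF0 1) (hF0 0) (hF0 2) (hF0 3)
      (by linarith [c0s]) hd c00 h10 (hE 0)
  have k1 : 1 ≤ D 1 :=
    vert333 d (D 1) (E1 0) (E1 1) (E1 2) (E1 3) (hF1 0) (hF1 1) (hF1 2) (hF1 3)
      c1s hd c11 h11 (hE 1)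
  have k2 : 1 ≤ D 2 :=
    vert333 d (D 2) (E2 0) (E2 2) (E2 1) (E2 3) (hF2 0) (hF2 2) (hF2 1) (hF2 3)
      (by linarith [c2s]) hd c22 h12 (hE 2)
  have k3 : 1 ≤ D 3 :=
    vert333 d (D 3) (E3 0) (E3 3) (E3 1) (E3 2) (hF3 0) (hF3 3) (hF3 1) (hF3 2)
      (by linarith [c3s]) hd c33 h13 (hE 3)
  linarith

private lemma lower323 (D : Fin 4 → ℤ) (hE : ∀ v, 0 ≤ D v)
    (hPR : (bananaPath 3 (fun i => if i = 1 then 2 else 3)).PosRank D) (d : ℤ) (hd : d ≤ 3)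
    (hdeg : D 0 + D 1 + D 2 + D 3 = d) : False := by
  obtain ⟨E0, hL0, hF0, h10⟩ := hPR 0
  obtain ⟨E1, hL1, hF1, h11⟩ := hPR 1
  obtain ⟨E2, hL2, hF2, h12⟩ := hPR 2
  obtain ⟨E3, hL3, hF3, h13⟩ := hPR 3
  obtain ⟨x0, y0, z0, a00, a01, a02, a03⟩ := expand323 D E0 hL0
  obtain ⟨x1, y1, z1, a10, a11, a12, a13⟩ := expand323 D E1 hL1
  obtain ⟨x2, y2, z2, a20, a21, a22, a23⟩ := expand323 D E2 hL2
  obtain ⟨x3, y3, z3, a30, a31, a32, a33⟩ := expand323 D E3 hL3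
  obtain ⟨c00, c03, c0p, c0s⟩ :=
    cov_fact323 d (D 0) (D 1) (D 2) (D 3) _ _ _ _ _ _ _ hdeg a00 a01 a02 a03
  obtain ⟨c10, c13, c1p, c1s⟩ :=
    cov_fact323 d (D 0) (D 1) (D 2) (D 3) _ _ _ _ _ _ _ hdeg a10 a11 a12 a13
  obtain ⟨c20, c23, c2p, c2s⟩ :=
    cov_fact323 d (D 0) (D 1) (D 2) (D 3) _ _ _ _ _ _ _ hdeg a20 a21 a22 a23
  obtain ⟨c30, c33, c3p, c3s⟩ :=
    cov_fact323 d (D 0) (D 1) (D 2) (D 3) _ _ _ _ _ _ _ hdeg a30 a31 a32 a33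
  obtain ⟨k0, k0', k3, k3'⟩ :=
    claim0_323 d (D 0) (D 1) (D 2) (D 3) (E0 0) (E0 1) (E0 2) (E0 3)
      (E3 0) (E3 1) (E3 2) (E3 3) (hE 0) (hE 1) (hE 2) (hE 3) hd hdeg
      (hF0 0) (hF0 1) (hF0 2) (hF0 3) c0s h10 c00 c03 c0p
      (hF3 0) (hF3 1) (hF3 2) (hF3 3) c3s h13 c30 c33 c3p
  exact claimMid_323 d (D 0) (D 1) (D 2) (D 3) (E1 0) (E1 1) (E1 2) (E1 3)
      (E2 0) (E2 1) (E2 2) (E2 3) k0 k0' (hE 1) (hE 2) k3 k3' hd hdeg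
      (hF1 0) (hF1 1) (hF1 2) (hF1 3) c1s h11 c10 c13 c1p
      (hF2 0) (hF2 1) (hF2 2) (hF2 3) c2s h12 c20 c23 c2p

open Multigraph in
/-- The banana path `B_{(3,3,3)}` has gonality `3`, and the banana path
`B_{(3,2,3)}` obtained from it by deleting one edge of the middle bunch has gonality `4`. -/
theorem banana_path_333_and_323_gonality :
    (bananaPath 3 (fun _ => 3)).gonality = 3 ∧
    (bananaPath 3 (fun i => if i = 1 then 2 else 3)).gonality = 4 := by
  constructor
  · -- B_{3,3,3}
    have hmem : (3 : ℕ) ∈ {d : ℕ | ∃ D : Fin 4 → ℤ, Effective D ∧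
        (bananaPath 3 (fun _ => 3)).PosRank D ∧ degree D = (d : ℤ)} := by
      refine ⟨fun i => if i = 0 then 3 else 0, ?_, ?_, ?_⟩
      · intro v; fin_cases v <;> norm_num [Fin.ext_iff, fin4_vals.1, fin4_vals.2.1, fin4_vals.2.2.1, fin4_vals.2.2.2]
      · intro v
        fin_cases v
        · exact ⟨fun i => if i = 0 then 3 else 0,
            mkLin333 _ _ (fun _ => 0) (by ring) (by ring) (by ring) (by ring),
            fun u => by fin_cases u <;> norm_num [Fin.ext_iff, fin4_vals.1, fin4_vals.2.1, fin4_vals.2.2.1, fin4_vals.2.2.2], by norm_num [Fin.ext_iff, fin4_vals.1, fin4_vals.2.1, fin4_vals.2.2.1, fin4_vals.2.2.2]⟩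
        · refine ⟨fun i => if i = 1 then 3 else 0,
            mkLin333 _ _ (fun i => if i = 0 then 0 else -1)
              (by norm_num [Fin.ext_iff, fin4_vals.1, fin4_vals.2.1, fin4_vals.2.2.1, fin4_vals.2.2.2]) (by norm_num [Fin.ext_iff, fin4_vals.1, fin4_vals.2.1, fin4_vals.2.2.1, fin4_vals.2.2.2])
              (by norm_num [Fin.ext_iff, fin4_vals.1, fin4_vals.2.1, fin4_vals.2.2.1, fin4_vals.2.2.2]) (by norm_num [Fin.ext_iff, fin4_vals.1, fin4_vals.2.1, fin4_vals.2.2.1, fin4_vals.2.2.2]),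
            fun u => by fin_cases u <;> norm_num [Fin.ext_iff, fin4_vals.1, fin4_vals.2.1, fin4_vals.2.2.1, fin4_vals.2.2.2], by norm_num [Fin.ext_iff, fin4_vals.1, fin4_vals.2.1, fin4_vals.2.2.1, fin4_vals.2.2.2]⟩
        · refine ⟨fun i => if i = 2 then 3 else 0,
            mkLin333 _ _ (fun i => if i = 0 then 0 else if i = 1 then -1 else -2)
              (by norm_num [Fin.ext_iff, fin4_vals.1, fin4_vals.2.1, fin4_vals.2.2.1, fin4_vals.2.2.2]) (by norm_num [Fin.ext_iff, fin4_vals.1, fin4_vals.2.1, fin4_vals.2.2.1, fin4_vals.2.2.2])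
              (by norm_num [Fin.ext_iff, fin4_vals.1, fin4_vals.2.1, fin4_vals.2.2.1, fin4_vals.2.2.2]) (by norm_num [Fin.ext_iff, fin4_vals.1, fin4_vals.2.1, fin4_vals.2.2.1, fin4_vals.2.2.2]),
            fun u => by fin_cases u <;> norm_num [Fin.ext_iff, fin4_vals.1, fin4_vals.2.1, fin4_vals.2.2.1, fin4_vals.2.2.2], by norm_num [Fin.ext_iff, fin4_vals.1, fin4_vals.2.1, fin4_vals.2.2.1, fin4_vals.2.2.2]⟩
        · refine ⟨fun i => if i = 3 then 3 else 0,
            mkLin333 _ _ (fun i => if i = 0 then 0 else if i = 1 then -1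
                else if i = 2 then -2 else -3)
              (by norm_num [Fin.ext_iff, fin4_vals.1, fin4_vals.2.1, fin4_vals.2.2.1, fin4_vals.2.2.2]) (by norm_num [Fin.ext_iff, fin4_vals.1, fin4_vals.2.1, fin4_vals.2.2.1, fin4_vals.2.2.2])
              (by norm_num [Fin.ext_iff, fin4_vals.1, fin4_vals.2.1, fin4_vals.2.2.1, fin4_vals.2.2.2]) (by norm_num [Fin.ext_iff, fin4_vals.1, fin4_vals.2.1, fin4_vals.2.2.1, fin4_vals.2.2.2]),
            fun u => by fin_cases u <;> norm_num [Fin.ext_iff, fin4_vals.1, fin4_vals.2.1, fin4_vals.2.2.1, fin4_vals.2.2.2], by norm_num [Fin.ext_iff, fin4_vals.1, fin4_vals.2.1, fin4_vals.2.2.1, fin4_vals.2.2.2]⟩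
      · norm_num [degree, Fin.sum_univ_four]
    refine le_antisymm (Nat.sInf_le hmem) (le_csInf ⟨3, hmem⟩ ?_)
    rintro d ⟨D, hEff, hPR, hdeg⟩
    by_contra h
    push_neg at h
    refine lower333 D hEff hPR d (by omega) ?_
    have : degree D = D 0 + D 1 + D 2 + D 3 := by
      simp [degree, Fin.sum_univ_four]
    omega
  · -- B_{3,2,3}
    have hmem : (4 : ℕ) ∈ {d : ℕ | ∃ D : Fin 4 → ℤ, Effective D ∧
        (bananaPath 3 (fun i => if i = 1 then 2 else 3)).PosRank D ∧ degree D = (d : ℤ)} := by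
      refine ⟨fun _ => 1, fun v => by norm_num, ?_, ?_⟩
      · intro v
        exact ⟨fun _ => 1, mkLin323 _ _ (fun _ => 0) (by ring) (by ring) (by ring) (by ring),
          fun u => by norm_num, by norm_num⟩
      · norm_num [degree, Fin.sum_univ_four]
    refine le_antisymm (Nat.sInf_le hmem) (le_csInf ⟨4, hmem⟩ ?_)
    rintro d ⟨D, hEff, hPR, hdeg⟩
    by_contra h
    push_neg at h
    refine lower323 D hEff hPR d (by omega) ?_
    have : degree D = D 0 + D 1 + D 2 + D 3 := by
      simp [degree, Fin.sum_univ_four]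
    omega
end
end

section
/- Let G be a finite connected loopless multigraph whose underlying simple graph contains a cycle, and let v, w be adjacent vertices lying on that cycle with a = |E(v,w)| edges between them in G. Then the divisor a·v is not linearly equivalent to the divisor a·w. -/
open Finset

attribute [local instance] Classical.propDecidable

noncomputable section

open Multigraph in
/-- If the underlying simple graph of a connected multigraph `G` contains a
cycle, and `v`, `w` are adjacent vertices on that cycle with `a = |E(v,w)|` edges between
them in `G`, then the divisor `a·v` is not linearly equivalent to the divisor `a·w`. -/
theorem cycle_divisors_not_equiv
    {V : Type} [Fintype V] (G : Multigraph V) (hG : G.Connected)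
    (x v w : V) (c : G.underlying.Walk x x) (hc : c.IsCycle)
    (hvw : s(v, w) ∈ c.edges) :
    ¬ G.LinEquiv (fun u => if u = v then (G.mul v w : ℤ) else 0)
        (fun u => if u = w then (G.mul v w : ℤ) else 0) := by
  rintro ⟨σ, hσ⟩
  have hG' : G.underlying.Connected := hG
  have hadj : G.underlying.Adj v w :=
    G.underlying.mem_edgeSet.1 (c.edges_subset_edgeSet hvw)
  have ha : 0 < G.mul v w := hadj
  have haz : (0:ℤ) < (G.mul v w : ℤ) := by exact_mod_cast ha
  have hne : v ≠ w := hadj.ne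
  haveI : Nonempty V := ⟨v⟩
  set M := Finset.univ.sup' Finset.univ_nonempty σ with hM
  set A : Finset V := Finset.univ.filter (fun u => σ u = M) with hA
  have hmemA : ∀ u, u ∈ A ↔ σ u = M := by intro u; simp [hA]
  have hle : ∀ u, σ u ≤ M := fun u => Finset.le_sup' σ (Finset.mem_univ u)
  have hAne : A.Nonempty := by
    obtain ⟨u, _, hu⟩ := Finset.exists_mem_eq_sup' Finset.univ_nonempty σ
    exact ⟨u, (hmemA u).2 hu.symm⟩
  have key : ∀ u, ∑ t, (G.mul u t : ℤ) * (σ u - σ t)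
      = (if u = v then (G.mul v w : ℤ) else 0)
        - (if u = w then (G.mul v w : ℤ) else 0) := by
    intro u
    have h1 := hσ u
    simp only at h1
    have h2 : ∑ t, (G.mul u t : ℤ) * (σ u - σ t)
        = -∑ t, (G.mul u t : ℤ) * (σ t - σ u) := by
      rw [← Finset.sum_neg_distrib]
      exact Finset.sum_congr rfl fun t _ => by ring
    rw [h2]; linarith
  by_cases hconst : ∀ u, σ u = M
  · have hk := key v
    rw [if_pos rfl, if_neg hne] at hk
    have hz : ∑ t, (G.mul v t : ℤ) * (σ v - σ t) = 0 :=
      Finset.sum_eq_zero fun t _ => by rw [hconst v, hconst t]; ring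
    rw [hz] at hk
    linarith
  push_neg at hconst
  obtain ⟨z, hz⟩ := hconst
  have hzA : z ∉ A := fun h => hz ((hmemA z).1 h)
  -- nonnegativity of terms for u in A
  have htnn : ∀ u ∈ A, ∀ t, 0 ≤ (G.mul u t : ℤ) * (σ u - σ t) := by
    intro u hu t
    apply mul_nonneg (Int.natCast_nonneg _)
    rw [sub_nonneg, (hmemA u).1 hu]
    exact hle t
  have hf_nonneg : ∀ u ∈ A, 0 ≤ ∑ t, (G.mul u t : ℤ) * (σ u - σ t) := fun u hu =>
    Finset.sum_nonneg fun t _ => htnn u hu t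
  have hterm : ∀ u ∈ A, ∀ t, t ∉ A →
      (G.mul u t : ℤ) ≤ (G.mul u t : ℤ) * (σ u - σ t) := by
    intro u hu t ht
    have h1 : σ t < M := lt_of_le_of_ne (hle t) (fun h => ht ((hmemA t).2 h))
    have h2 : (1:ℤ) ≤ σ u - σ t := by
      have := (hmemA u).1 hu; omega
    nlinarith [Int.natCast_nonneg (G.mul u t)]
  have hcross : ∀ u ∈ A, ∀ t, t ∉ A →
      (G.mul u t : ℤ) ≤ ∑ t', (G.mul u t' : ℤ) * (σ u - σ t') :=
    fun u hu t ht => le_trans (hterm u hu t ht)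
      (Finset.single_le_sum (fun t' _ => htnn u hu t') (Finset.mem_univ t))
  have hS : ∑ u ∈ A, ∑ t, (G.mul u t : ℤ) * (σ u - σ t)
      = (if v ∈ A then (G.mul v w : ℤ) else 0)
        - (if w ∈ A then (G.mul v w : ℤ) else 0) := by
    rw [Finset.sum_congr rfl fun u _ => key u, Finset.sum_sub_distrib,
      Finset.sum_ite_eq' A v (fun _ => (G.mul v w : ℤ)),
      Finset.sum_ite_eq' A w (fun _ => (G.mul v w : ℤ))]
  -- boundary dart argument in the easy cases
  have hbd : ∀ u₀ ∈ A, ∀ z₀, z₀ ∉ A →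
      (1:ℤ) ≤ ∑ u ∈ A, ∑ t, (G.mul u t : ℤ) * (σ u - σ t) := by
    intro u₀ hu₀ z₀ hz₀
    obtain ⟨p⟩ := hG'.preconnected u₀ z₀
    obtain ⟨d, _, hd1, hd2⟩ := p.exists_boundary_dart (A : Set V)
      (Finset.mem_coe.2 hu₀) (fun h => hz₀ (Finset.mem_coe.1 h))
    have hd1' : d.fst ∈ A := Finset.mem_coe.1 hd1
    have hd2' : d.snd ∉ A := fun h => hd2 (Finset.mem_coe.2 h)
    have hdadj : G.underlying.Adj d.fst d.snd := d.adj
    have hmul1 : (1:ℤ) ≤ (G.mul d.fst d.snd : ℤ) := by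
      have : 0 < G.mul d.fst d.snd := hdadj
      exact_mod_cast this
    exact le_trans (le_trans hmul1 (hcross _ hd1' _ hd2'))
      (Finset.single_le_sum (fun u hu => hf_nonneg u hu) hd1')
  by_cases hwA : w ∈ A
  · have h1 := hbd w hwA z hzA
    rw [hS, if_pos hwA] at h1
    split_ifs at h1 <;> linarith
  by_cases hvA : v ∈ A
  · -- main case: v ∈ A, w ∉ A; use the cycle to find a second crossing edge
    have hr : (G.underlying.deleteEdges {s(v, w)}).Reachable v w :=
      (SimpleGraph.adj_and_reachable_delete_edges_iff_exists_cycle.2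
        ⟨x, c, hc, hvw⟩).2
    obtain ⟨p⟩ := hr
    obtain ⟨d, _, hd1, hd2⟩ := p.exists_boundary_dart (A : Set V)
      (Finset.mem_coe.2 hvA) (fun h => hwA (Finset.mem_coe.1 h))
    have hd1' : d.fst ∈ A := Finset.mem_coe.1 hd1
    have hd2' : d.snd ∉ A := fun h => hd2 (Finset.mem_coe.2 h)
    have hdadj' : (G.underlying.deleteEdges {s(v, w)}).Adj d.fst d.snd := d.adj
    rw [SimpleGraph.deleteEdges_adj] at hdadj'
    have hdadj : G.underlying.Adj d.fst d.snd := hdadj'.1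
    have hne2 : s(d.fst, d.snd) ≠ s(v, w) := by
      intro h; exact hdadj'.2 (by simp [h])
    have hmul1 : (1:ℤ) ≤ (G.mul d.fst d.snd : ℤ) := by
      have : 0 < G.mul d.fst d.snd := hdadj
      exact_mod_cast this
    have hSval : ∑ u ∈ A, ∑ t, (G.mul u t : ℤ) * (σ u - σ t) = (G.mul v w : ℤ) := by
      rw [hS, if_pos hvA, if_neg hwA, sub_zero]
    by_cases hdv : d.fst = v
    · have hqw : d.snd ≠ w := by
        intro h; exact hne2 (by rw [hdv, h])
      have hps : ∑ t ∈ ({w, d.snd} : Finset V), (G.mul v t : ℤ) * (σ v - σ t)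
          = (G.mul v w : ℤ) * (σ v - σ w) + (G.mul v d.snd : ℤ) * (σ v - σ d.snd) :=
        Finset.sum_pair (show w ≠ d.snd from fun h => hqw h.symm)
      have hpair : (G.mul v w : ℤ) * (σ v - σ w)
            + (G.mul v d.snd : ℤ) * (σ v - σ d.snd)
          ≤ ∑ t, (G.mul v t : ℤ) * (σ v - σ t) :=
        hps ▸ Finset.sum_le_sum_of_subset_of_nonneg (Finset.subset_univ _)
          (fun t _ _ => htnn v hvA t)
      have ht1 : (G.mul v w : ℤ) ≤ (G.mul v w : ℤ) * (σ v - σ w) :=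
        hterm v hvA w hwA
      have ht2 : (1:ℤ) ≤ (G.mul v d.snd : ℤ) * (σ v - σ d.snd) := by
        have := hterm d.fst hd1' d.snd hd2'
        rw [hdv] at this hmul1
        linarith
      have hsingle : ∑ t, (G.mul v t : ℤ) * (σ v - σ t)
          ≤ ∑ u ∈ A, ∑ t, (G.mul u t : ℤ) * (σ u - σ t) :=
        Finset.single_le_sum (fun u hu => hf_nonneg u hu) hvA
      rw [hSval] at hsingle
      linarith
    · have hps : ∑ u ∈ ({v, d.fst} : Finset V), ∑ t, (G.mul u t : ℤ) * (σ u - σ t)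
          = (∑ t, (G.mul v t : ℤ) * (σ v - σ t))
            + (∑ t, (G.mul d.fst t : ℤ) * (σ d.fst - σ t)) :=
        Finset.sum_pair (show v ≠ d.fst from fun h => hdv h.symm)
      have hpair : (∑ t, (G.mul v t : ℤ) * (σ v - σ t))
            + (∑ t, (G.mul d.fst t : ℤ) * (σ d.fst - σ t))
          ≤ ∑ u ∈ A, ∑ t, (G.mul u t : ℤ) * (σ u - σ t) := by
        rw [← hps]
        refine Finset.sum_le_sum_of_subset_of_nonneg ?_ (fun u hu _ => hf_nonneg u hu)
        intro u hu
        rcases Finset.mem_insert.1 hu with h | h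
        · exact h ▸ hvA
        · exact (Finset.mem_singleton.1 h) ▸ hd1'
      have ht1 : (G.mul v w : ℤ) ≤ ∑ t, (G.mul v t : ℤ) * (σ v - σ t) :=
        hcross v hvA w hwA
      have ht2 : (1:ℤ) ≤ ∑ t, (G.mul d.fst t : ℤ) * (σ d.fst - σ t) :=
        le_trans hmul1 (hcross d.fst hd1' d.snd hd2')
      rw [hSval] at hpair
      linarith
  · obtain ⟨u₀, hu₀⟩ := hAne
    have h1 := hbd u₀ hu₀ v hvA
    rw [hS, if_neg hvA, if_neg hwA] at h1
    linarith
end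
end
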